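/- arXiv:2604.25279 — 3 statements merged into one kernel-verified Lean document; each statement's English description precedes it below -/
import Mathlib

section
/- Along the ESSA iteration under Assumption 1, with M₁, M₂ uniform bounds on the states and costates respectively, set M₄ = (1 + √(k+1)·M₁)(1 + M₂) and M₃ = (M₄²/ε⁰_min)·‖μ‖²_{L²([t₀,T])}. Then for all i ∈ ℕ, ε^i_min · ‖u^i − u^{i−1}‖²_{L²([t₀,T])} ≤ M₃, where ε^i_min > 0 is the smallest eigenvalue of the diagonal matrix C^i ≻ 0. -/
open MeasureTheory Filter Set
open scoped RealInnerProductSpace Topology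

noncomputable section

/-- `ℝⁿ` with the Euclidean norm. -/
abbrev Vec (n : ℕ) := EuclideanSpace ℝ (Fin n)

/-- `ℝ^{(k+1)n}`, the space of tuples `X = (x₀,…,x_k)` with the Euclidean norm. -/
abbrev XVec (k n : ℕ) := PiLp 2 (fun _ : Fin (k + 1) => Vec n)

variable {n m k : ℕ}

/-- Update the `i`-th block of `X`. -/
def updX (X : XVec k n) (i : Fin (k + 1)) (ξ : Vec n) : XVec k n :=
  WithLp.toLp 2 (Function.update X i ξ)

/-- The delayed-state tuple `X_h(t) = (x(t-h₀),…,x(t-h_k))`. -/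
def Xh (hdel : Fin (k + 1) → ℝ) (x : ℝ → Vec n) (t : ℝ) : XVec k n :=
  WithLp.toLp 2 (fun i => x (t - hdel i))

variable {F : Type*} [NormedAddCommGroup F] [NormedSpace ℝ F]

/-- Partial (Fréchet) derivative of `ψ(X,u)` with respect to the block `x_i`. -/
def pdX (ψ : XVec k n → Vec m → F) (i : Fin (k + 1)) (X : XVec k n) (v : Vec m) :
    Vec n →L[ℝ] F :=
  fderiv ℝ (fun ξ => ψ (updX X i ξ) v) (X i)

/-- Partial (Fréchet) derivative of `ψ(X,u)` with respect to `u`. -/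
def pdU (ψ : XVec k n → Vec m → F) (X : XVec k n) (v : Vec m) : Vec m →L[ℝ] F :=
  fderiv ℝ (fun w => ψ X w) v

/-- Partial derivative in `x_i` for a function of `(X,u,λ)`. -/
def pd3X (g : XVec k n → Vec m → Vec n → F) (i : Fin (k + 1)) (X : XVec k n)
    (v : Vec m) (p : Vec n) : Vec n →L[ℝ] F :=
  fderiv ℝ (fun ξ => g (updX X i ξ) v p) (X i)

/-- Partial derivative in `u` for a function of `(X,u,λ)`. -/
def pd3U (g : XVec k n → Vec m → Vec n → F) (X : XVec k n) (v : Vec m) (p : Vec n) :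
    Vec m →L[ℝ] F :=
  fderiv ℝ (fun w => g X w p) v

/-- Partial derivative in `λ` for a function of `(X,u,λ)`. -/
def pd3L (g : XVec k n → Vec m → Vec n → F) (X : XVec k n) (v : Vec m) (p : Vec n) :
    Vec n →L[ℝ] F :=
  fderiv ℝ (fun q => g X v q) p

/-- Gradient of a scalar function of `X` with respect to the block `x_i`. -/
def gradXj (g : XVec k n → ℝ) (i : Fin (k + 1)) (X : XVec k n) : Vec n :=
  gradient (fun ξ => g (updX X i ξ)) (X i)

/-- Gradient in `u` of a scalar function of `(X,u,λ)`. -/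
def grad3U (g : XVec k n → Vec m → Vec n → ℝ) (X : XVec k n) (v : Vec m) (p : Vec n) :
    Vec m :=
  gradient (fun w => g X w p) v

/-- Assumption 1 of the paper for `ψ ∈ {f,ℓ}`. -/
structure Assumption1 {G : Type*} [NormedAddCommGroup G] [NormedSpace ℝ G]
    [MeasurableSpace G] (ψ : ℝ → XVec k n → Vec m → G) (U : Set (Vec m)) (t₀ T : ℝ)
    (μ : ℝ → ℝ) : Prop where
  smooth : ∀ t, ContDiff ℝ 2 (fun q : XVec k n × Vec m => ψ t q.1 q.2)
  meas : ∀ X v, Measurable fun t => ψ t X v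
  μ_meas : Measurable μ
  μ_nonneg : ∀ t, 0 ≤ μ t
  μ_L2 : MemLp μ 2 (volume.restrict (Set.Icc t₀ T))
  bd_val : ∀ t ∈ Set.Icc t₀ T, ∀ (X : XVec k n), ∀ v ∈ U, ‖ψ t X v‖ ≤ μ t * (‖X‖ + 1)
  bd_X : ∀ t ∈ Set.Icc t₀ T, ∀ (X : XVec k n), ∀ v ∈ U, ∀ i,
      ‖pdX (ψ t) i X v‖ ≤ μ t * (‖X‖ + 1)
  bd_U : ∀ t ∈ Set.Icc t₀ T, ∀ (X : XVec k n), ∀ v ∈ U, ‖pdU (ψ t) X v‖ ≤ μ t * (‖X‖ + 1)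
  bd_XX : ∀ t ∈ Set.Icc t₀ T, ∀ (X : XVec k n), ∀ v ∈ U, ∀ i j,
      ‖pdX (fun X' v' => pdX (ψ t) i X' v') j X v‖ ≤ μ t * (‖X‖ + 1)
  bd_XU : ∀ t ∈ Set.Icc t₀ T, ∀ (X : XVec k n), ∀ v ∈ U, ∀ i,
      ‖pdU (fun X' v' => pdX (ψ t) i X' v') X v‖ ≤ μ t * (‖X‖ + 1)
  bd_UX : ∀ t ∈ Set.Icc t₀ T, ∀ (X : XVec k n), ∀ v ∈ U, ∀ i,
      ‖pdX (fun X' v' => pdU (ψ t) X' v') i X v‖ ≤ μ t * (‖X‖ + 1)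
  bd_UU : ∀ t ∈ Set.Icc t₀ T, ∀ (X : XVec k n), ∀ v ∈ U,
      ‖pdU (fun X' v' => pdU (ψ t) X' v') X v‖ ≤ μ t * (‖X‖ + 1)

/-- The Hamiltonian `H(t,X,u,λ) = (ℓ(t,X,u) + λᵀ f(t,X,u))·1_{(-∞,T]}(t)`. -/
def Ham (f : ℝ → XVec k n → Vec m → Vec n) (l : ℝ → XVec k n → Vec m → ℝ) (T : ℝ)
    (t : ℝ) (X : XVec k n) (v : Vec m) (p : Vec n) : ℝ :=
  Set.indicator (Set.Iic T) (fun _ => l t X v + ⟪p, f t X v⟫) t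

/-- A measurable control with values in `U` on `[t₀,T]` (membership in `𝒰`). -/
def IsControl (U : Set (Vec m)) (t₀ T : ℝ) (u : ℝ → Vec m) : Prop :=
  Measurable u ∧ ∀ t ∈ Set.Icc t₀ T, u t ∈ U

/-- (Carathéodory/absolutely continuous) solution of the delay system
`ẋ(t) = f(t,X_h(t),u(t))` a.e. on `[t₀,T]`, `x(t₀+θ)=φ(θ)` on `[-h,0]`. -/
def IsSolution (f : ℝ → XVec k n → Vec m → Vec n) (t₀ T hmax : ℝ)
    (hdel : Fin (k + 1) → ℝ) (φ : ℝ → Vec n) (u : ℝ → Vec m) (x : ℝ → Vec n) : Prop :=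
  (∀ θ ∈ Set.Icc (-hmax) (0 : ℝ), x (t₀ + θ) = φ θ) ∧
  IntervalIntegrable (fun s => f s (Xh hdel x s) (u s)) volume t₀ T ∧
  ∀ t ∈ Set.Icc t₀ T, x t = φ 0 + ∫ s in t₀..t, f s (Xh hdel x s) (u s)

/-- Right-hand side `∑_{j=0}^k ∇_{x_j}H(s+h_j, X_h(s+h_j), u(s+h_j), λ(s+h_j))`
of the costate equation. -/
def costateRHS (f : ℝ → XVec k n → Vec m → Vec n) (l : ℝ → XVec k n → Vec m → ℝ)
    (T : ℝ) (hdel : Fin (k + 1) → ℝ) (u : ℝ → Vec m) (x : ℝ → Vec n)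
    (lam : ℝ → Vec n) (s : ℝ) : Vec n :=
  ∑ j : Fin (k + 1),
    gradXj (fun X => Ham f l T (s + hdel j) X (u (s + hdel j)) (lam (s + hdel j))) j
      (Xh hdel x (s + hdel j))

/-- (Absolutely continuous) solution of the costate equation
`λ̇(t) = -∑_j ∇_{x_j}H(t+h_j, X_h(t+h_j), u(t+h_j), λ(t+h_j))` a.e. on `[t₀,T]`,
with `λ(t) = 0` for `t ≥ T`. -/
def IsCostate (f : ℝ → XVec k n → Vec m → Vec n) (l : ℝ → XVec k n → Vec m → ℝ)
    (t₀ T : ℝ) (hdel : Fin (k + 1) → ℝ) (u : ℝ → Vec m) (x : ℝ → Vec n)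
    (lam : ℝ → Vec n) : Prop :=
  (∀ t, T ≤ t → lam t = 0) ∧
  IntervalIntegrable (costateRHS f l T hdel u x lam) volume t₀ T ∧
  ∀ t ∈ Set.Icc t₀ T, lam t = ∫ s in t..T, costateRHS f l T hdel u x lam s

/-- The cost functional `J(u) = ∫_{t₀}^T ℓ(t, X_h(t), u(t)) dt` (with `x` the state
corresponding to `u`). -/
def cost (l : ℝ → XVec k n → Vec m → ℝ) (t₀ T : ℝ) (hdel : Fin (k + 1) → ℝ)
    (u : ℝ → Vec m) (x : ℝ → Vec n) : ℝ :=
  ∫ t in t₀..T, l t (Xh hdel x t) (u t)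

/-- Squared `L²([t₀,T])` distance between two controls. -/
def dL2sq (t₀ T : ℝ) (u w : ℝ → Vec m) : ℝ :=
  ∫ t in t₀..T, ‖u t - w t‖ ^ 2

/-- `L²([t₀,T])` distance between two controls. -/
def dL2 (t₀ T : ℝ) (u w : ℝ → Vec m) : ℝ :=
  Real.sqrt (dL2sq t₀ T u w)

/-- `L^∞([t₀,T])` (essential sup) distance between two controls. -/
def dLinf (t₀ T : ℝ) (u w : ℝ → Vec m) : ℝ :=
  essSup (fun t => ‖u t - w t‖) (volume.restrict (Set.Icc t₀ T))

/-- Smallest eigenvalue of the positive-definite diagonal matrix with diagonal `c`. -/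
def εmin (c : Fin m → ℝ) : ℝ := ⨅ j, c j

/-- The quadratic form `wᵀ C w` for the diagonal matrix `C = diag c`. -/
def quadC (c : Fin m → ℝ) (w : Vec m) : ℝ := ∑ j, c j * (w j) ^ 2

/-- The vector `C w` for the diagonal matrix `C = diag c`. -/
def diagMul (c : Fin m → ℝ) (w : Vec m) : Vec m := WithLp.toLp 2 (fun j => c j * w j)

/-- Euclidean projection onto `U`: `P_U(q) = argmin_{w ∈ U} ‖q - w‖`. -/
def projU (U : Set (Vec m)) (q : Vec m) : Vec m :=
  Classical.epsilon fun w => w ∈ U ∧ ∀ z ∈ U, ‖q - w‖ ≤ ‖q - z‖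

/-- Assumption 2: `H_uu(t,X,u,λ) ⪰ R ⪰ 0`, with `rmin` the smallest eigenvalue of
`R` (equivalently, `H_uu ⪰ rmin·I` with `rmin ≥ 0`). -/
def Assumption2 (f : ℝ → XVec k n → Vec m → Vec n) (l : ℝ → XVec k n → Vec m → ℝ)
    (t₀ T : ℝ) (rmin : ℝ) : Prop :=
  0 ≤ rmin ∧ ∀ t ∈ Set.Icc t₀ T, ∀ (X : XVec k n) (v : Vec m) (p : Vec n) (w : Vec m),
    rmin * ‖w‖ ^ 2 ≤ pd3U (fun X' v' p' => pd3U (Ham f l T t) X' v' p') X v p w w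

/-- The ESSA iteration: controls `u^i`, states `x^i`, costates `λ^i` and diagonal
matrices `C^i = diag (c i) ≻ 0` with nondecreasing smallest eigenvalues, where for
a.e. `t`, `u^{i+1}(t)` minimizes the augmented Hamiltonian
`v ↦ H(t, X^{i+1}_h(t), v, λ^i(t)) + (v - u^i(t))ᵀ C^{i+1} (v - u^i(t))` over `U`. -/
structure ESSA (f : ℝ → XVec k n → Vec m → Vec n) (l : ℝ → XVec k n → Vec m → ℝ)
    (U : Set (Vec m)) (t₀ T hmax : ℝ) (hdel : Fin (k + 1) → ℝ) (φ : ℝ → Vec n)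
    (u : ℕ → ℝ → Vec m) (x : ℕ → ℝ → Vec n) (lam : ℕ → ℝ → Vec n)
    (c : ℕ → Fin m → ℝ) : Prop where
  ctrl : ∀ i, IsControl U t₀ T (u i)
  state : ∀ i, IsSolution f t₀ T hmax hdel φ (u i) (x i)
  costate : ∀ i, IsCostate f l t₀ T hdel (u i) (x i) (lam i)
  cpos : ∀ i j, 0 < c i j
  cmono : ∀ i, εmin (c i) ≤ εmin (c (i + 1))
  step2 : ∀ i : ℕ, ∀ᵐ t ∂(volume.restrict (Set.Icc t₀ T)), ∀ v ∈ U,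
    Ham f l T t (Xh hdel (x (i + 1)) t) (u (i + 1) t) (lam i t)
        + quadC (c (i + 1)) (u (i + 1) t - u i t)
      ≤ Ham f l T t (Xh hdel (x (i + 1)) t) v (lam i t) + quadC (c (i + 1)) (v - u i t)

/-- Weak convergence in `L²([t₀,T]; ℝᵐ)`. -/
def WeakL2Conv (t₀ T : ℝ) (w : ℕ → ℝ → Vec m) (wbar : ℝ → Vec m) : Prop :=
  ∀ g : ℝ → Vec m, MemLp g 2 (volume.restrict (Set.Icc t₀ T)) →
    Tendsto (fun i => ∫ t in t₀..T, ⟪w i t, g t⟫) atTop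
      (𝓝 (∫ t in t₀..T, ⟪wbar t, g t⟫))

/-- A function is piecewise constant on the grid `ρ` if it is constant on every
interval `[ρ_{j-1}, ρ_j)`. -/
def PiecewiseConstOn {N : ℕ} (ρ : Fin (N + 1) → ℝ) (g : ℝ → Vec m) : Prop :=
  ∀ j : Fin N, ∀ t ∈ Set.Ico (ρ j.castSucc) (ρ j.succ), g t = g (ρ j.castSucc)

end

noncomputable section

variable {n m k : ℕ} {F : Type*} [NormedAddCommGroup F] [NormedSpace ℝ F]

/-- Partial (Fréchet) derivative in the block `x_i` of a function of `X` only. -/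
def pdX0 (g : XVec k n → F) (i : Fin (k + 1)) (X : XVec k n) : Vec n →L[ℝ] F :=
  fderiv ℝ (fun ξ => g (updX X i ξ)) (X i)

/-- Assumption 1 for a control-independent function of `(t,X)` (e.g. `f₀`, `ℓ₀`). -/
structure Assumption1X {G : Type*} [NormedAddCommGroup G] [NormedSpace ℝ G]
    [MeasurableSpace G] (ψ : ℝ → XVec k n → G) (t₀ T : ℝ) (μ : ℝ → ℝ) : Prop where
  smooth : ∀ t, ContDiff ℝ 2 (ψ t)
  meas : ∀ X, Measurable fun t => ψ t X
  μ_meas : Measurable μ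
  μ_nonneg : ∀ t, 0 ≤ μ t
  μ_L2 : MemLp μ 2 (volume.restrict (Set.Icc t₀ T))
  bd_val : ∀ t ∈ Set.Icc t₀ T, ∀ (X : XVec k n), ‖ψ t X‖ ≤ μ t * (‖X‖ + 1)
  bd_X : ∀ t ∈ Set.Icc t₀ T, ∀ (X : XVec k n) (i : Fin (k + 1)),
      ‖pdX0 (ψ t) i X‖ ≤ μ t * (‖X‖ + 1)
  bd_XX : ∀ t ∈ Set.Icc t₀ T, ∀ (X : XVec k n) (i j : Fin (k + 1)),
      ‖pdX0 (fun X' => pdX0 (ψ t) i X') j X‖ ≤ μ t * (‖X‖ + 1)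

/-- Assumption 1 for the control-input matrix `G(t,X) ∈ ℝ^{n×m}`. -/
structure Assumption1G (ψ : ℝ → XVec k n → (Vec m →L[ℝ] Vec n)) (t₀ T : ℝ)
    (μ : ℝ → ℝ) : Prop where
  smooth : ∀ t, ContDiff ℝ 2 (ψ t)
  meas : ∀ (X : XVec k n) (w : Vec m), Measurable fun t => ψ t X w
  μ_meas : Measurable μ
  μ_nonneg : ∀ t, 0 ≤ μ t
  μ_L2 : MemLp μ 2 (volume.restrict (Set.Icc t₀ T))
  bd_val : ∀ t ∈ Set.Icc t₀ T, ∀ (X : XVec k n), ‖ψ t X‖ ≤ μ t * (‖X‖ + 1)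
  bd_X : ∀ t ∈ Set.Icc t₀ T, ∀ (X : XVec k n) (i : Fin (k + 1)),
      ‖pdX0 (ψ t) i X‖ ≤ μ t * (‖X‖ + 1)
  bd_XX : ∀ t ∈ Set.Icc t₀ T, ∀ (X : XVec k n) (i j : Fin (k + 1)),
      ‖pdX0 (fun X' => pdX0 (ψ t) i X') j X‖ ≤ μ t * (‖X‖ + 1)

end

section Aux
open scoped RealInnerProductSpace
variable {n m k : ℕ}

lemma aux_ham_lip
    {t₀ T : ℝ} {U : Set (Vec m)} {f : ℝ → XVec k n → Vec m → Vec n}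
    {l : ℝ → XVec k n → Vec m → ℝ} {μ : ℝ → ℝ}
    (hUconv : Convex ℝ U)
    (hf : Assumption1 f U t₀ T μ) (hl : Assumption1 l U t₀ T μ)
    {t : ℝ} (ht : t ∈ Set.Icc t₀ T) (X : XVec k n) (p : Vec n)
    {v w : Vec m} (hv : v ∈ U) (hw : w ∈ U) :
    ‖(l t X v + ⟪p, f t X v⟫) - (l t X w + ⟪p, f t X w⟫)‖
      ≤ μ t * (‖X‖ + 1) * (‖p‖ + 1) * ‖v - w‖ := by
  have hμ0 : 0 ≤ μ t := hl.μ_nonneg t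
  have hX1 : (0:ℝ) ≤ ‖X‖ + 1 := by positivity
  have hld : ∀ z : Vec m, DifferentiableAt ℝ (fun w' => l t X w') z := by
    intro z
    exact (((hl.smooth t).differentiable (by norm_num)) (X, z)).comp z
      (DifferentiableAt.prodMk (differentiableAt_const X) differentiableAt_id)
  have hfd : ∀ z : Vec m, DifferentiableAt ℝ (fun w' => f t X w') z := by
    intro z
    exact (((hf.smooth t).differentiable (by norm_num)) (X, z)).comp z
      (DifferentiableAt.prodMk (differentiableAt_const X) differentiableAt_id)
  set D : Vec m → (Vec m →L[ℝ] ℝ) :=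
    fun z => pdU (l t) X z + (innerSL ℝ p).comp (pdU (f t) X z) with hD
  have hDg : ∀ z ∈ U, HasFDerivWithinAt
      (fun z' : Vec m => l t X z' + ⟪p, f t X z'⟫) (D z) U z := by
    intro z _
    have h1 : HasFDerivAt (fun w' => l t X w') (pdU (l t) X z) z := (hld z).hasFDerivAt
    have h2 : HasFDerivAt (fun w' => f t X w') (pdU (f t) X z) z := (hfd z).hasFDerivAt
    have h3 : HasFDerivAt (fun w' => ⟪p, f t X w'⟫)
        ((innerSL ℝ p).comp (pdU (f t) X z)) z := ((innerSL ℝ p).hasFDerivAt).comp z h2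
    exact (h1.add h3).hasFDerivWithinAt
  have hbd : ∀ z ∈ U, ‖D z‖ ≤ μ t * (‖X‖ + 1) * (‖p‖ + 1) := by
    intro z hz
    have b1 : ‖pdU (l t) X z‖ ≤ μ t * (‖X‖ + 1) := hl.bd_U t ht X z hz
    have b2 : ‖(innerSL ℝ p).comp (pdU (f t) X z)‖ ≤ ‖p‖ * (μ t * (‖X‖ + 1)) := by
      calc ‖(innerSL ℝ p).comp (pdU (f t) X z)‖
          ≤ ‖innerSL ℝ p‖ * ‖pdU (f t) X z‖ := ContinuousLinearMap.opNorm_comp_le _ _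
        _ ≤ ‖p‖ * (μ t * (‖X‖ + 1)) := by
            rw [innerSL_apply_norm]
            exact mul_le_mul_of_nonneg_left (hf.bd_U t ht X z hz) (norm_nonneg p)
    calc ‖D z‖ ≤ ‖pdU (l t) X z‖ + ‖(innerSL ℝ p).comp (pdU (f t) X z)‖ := norm_add_le _ _
      _ ≤ μ t * (‖X‖ + 1) + ‖p‖ * (μ t * (‖X‖ + 1)) := add_le_add b1 b2
      _ = μ t * (‖X‖ + 1) * (‖p‖ + 1) := by ring
  exact hUconv.norm_image_sub_le_of_norm_hasFDerivWithin_le hDg hbd hw hv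

lemma aux_arith {e a M d : ℝ} (he : 0 < e) (hea : e ≤ a) (hM : 0 ≤ M) (hd : 0 ≤ d)
    (h : a * d ^ 2 ≤ M * d) : a * d ^ 2 ≤ M ^ 2 / e := by
  rcases hd.eq_or_lt with h0 | h0
  · rw [← h0]
    have : (0:ℝ) ≤ M ^ 2 / e := by positivity
    simpa using this
  · have ha : 0 < a := lt_of_lt_of_le he hea
    have had : a * d ≤ M := by
      have h' : a * d * d ≤ M * d := by nlinarith [h]
      exact le_of_mul_le_mul_right h' h0
    rw [le_div_iff₀ he]
    nlinarith [mul_self_le_mul_self (by positivity : (0:ℝ) ≤ a * d) had,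
      mul_le_mul_of_nonneg_right hea (mul_nonneg ha.le (sq_nonneg d))]

end Aux

/-- Proposition 4: regularisation bound
`ε^i_min ‖u^i - u^{i-1}‖²_L² ≤ M₃ = (M₄²/ε⁰_min)‖μ‖²_L²` along the ESSA iteration,
where `M₄ = (1 + √(k+1)·M₁)(1 + M₂)`. -/
theorem essa_discrepancy_bound
    {n m k : ℕ} (t₀ T hmax : ℝ) (hdel : Fin (k + 1) → ℝ) (U : Set (Vec m))
    (f : ℝ → XVec k n → Vec m → Vec n) (l : ℝ → XVec k n → Vec m → ℝ) (μ : ℝ → ℝ)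
    (ht₀ : 0 ≤ t₀) (hT : t₀ < T)
    (hdel0 : hdel 0 = 0) (hmono : StrictMono hdel) (hlast : hdel (Fin.last k) = hmax)
    (hU : IsCompact U) (hUconv : Convex ℝ U) (hUne : U.Nonempty)
    (hf : Assumption1 f U t₀ T μ) (hl : Assumption1 l U t₀ T μ)
    (φ : ℝ → Vec n) (hφ : ContinuousOn φ (Set.Icc (-hmax) (0 : ℝ)))
    (u : ℕ → ℝ → Vec m) (x lam : ℕ → ℝ → Vec n) (c : ℕ → Fin m → ℝ)
    (hessa : ESSA f l U t₀ T hmax hdel φ u x lam c)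
    (M₁ M₂ : ℝ) (hM₁ : 0 < M₁) (hM₂ : 0 < M₂)
    (hxbd : ∀ i, ∀ t ∈ Set.Icc (t₀ - hmax) T, ‖x i t‖ ≤ M₁)
    (hlambd : ∀ i, ∀ t ∈ Set.Icc t₀ T, ‖lam i t‖ ≤ M₂) :
    ∀ i : ℕ, εmin (c (i + 1)) * dL2sq t₀ T (u (i + 1)) (u i) ≤
      ((1 + Real.sqrt ((k : ℝ) + 1) * M₁) * (1 + M₂)) ^ 2 / εmin (c 0) *
        ∫ t in t₀..T, (μ t) ^ 2 := by
  intro i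
  rcases isEmpty_or_nonempty (Fin m) with hm | hm
  · simp [εmin, Real.iInf_of_isEmpty]
  -- notation
  set M₄ : ℝ := (1 + Real.sqrt ((k : ℝ) + 1) * M₁) * (1 + M₂) with hM₄def
  have hM₄pos : 0 < M₄ := by
    have : 0 ≤ Real.sqrt ((k : ℝ) + 1) * M₁ := by positivity
    have : (0:ℝ) < 1 + Real.sqrt ((k : ℝ) + 1) * M₁ := by linarith
    have h2 : (0:ℝ) < 1 + M₂ := by linarith
    exact mul_pos this h2
  have hbdd : ∀ j : ℕ, BddBelow (Set.range (c j)) := fun j => (Set.finite_range _).bddBelow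
  have hεpos : ∀ j : ℕ, 0 < εmin (c j) := by
    intro j
    obtain ⟨a, ha⟩ := Finite.exists_min (c j)
    have h1 : c j a ≤ εmin (c j) := le_ciInf ha
    exact lt_of_lt_of_le (hessa.cpos j a) h1
  have hεle : ∀ j : ℕ, εmin (c 0) ≤ εmin (c j) := by
    intro j
    induction j with
    | zero => exact le_rfl
    | succ j ih => exact ih.trans (hessa.cmono j)
  set ε₀ : ℝ := εmin (c 0) with hε₀def
  set εi : ℝ := εmin (c (i + 1)) with hεidef
  have hε₀pos : 0 < ε₀ := hεpos 0
  have hεipos : 0 < εi := hεpos (i + 1)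
  have hε₀i : ε₀ ≤ εi := hεle (i + 1)
  -- the key a.e. pointwise bound
  have key : ∀ᵐ t ∂(volume.restrict (Set.Icc t₀ T)),
      εi * ‖u (i + 1) t - u i t‖ ^ 2 ≤ M₄ ^ 2 / ε₀ * μ t ^ 2 := by
    filter_upwards [hessa.step2 i, ae_restrict_mem measurableSet_Icc] with t hstep htI
    have hμ0 : 0 ≤ μ t := hl.μ_nonneg t
    have hu1 : u (i + 1) t ∈ U := (hessa.ctrl (i + 1)).2 t htI
    have hu0 : u i t ∈ U := (hessa.ctrl i).2 t htI
    set X : XVec k n := Xh hdel (x (i + 1)) t with hXdef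
    set p : Vec n := lam i t with hpdef
    set Δ : Vec m := u (i + 1) t - u i t with hΔdef
    -- bound on ‖X‖
    have hXb : ‖X‖ ≤ Real.sqrt ((k : ℝ) + 1) * M₁ := by
      have hcomp : ∀ j : Fin (k + 1), ‖X j‖ ≤ M₁ := by
        intro j
        have h0j : 0 ≤ hdel j := hdel0 ▸ hmono.monotone (Fin.zero_le j)
        have hjh : hdel j ≤ hmax := hlast ▸ hmono.monotone (Fin.le_last j)
        simpa [hXdef, Xh] using hxbd (i + 1) (t - hdel j) ⟨by linarith [htI.1], by linarith [htI.2]⟩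
      have h1 : ‖X‖ = Real.sqrt (∑ j, ‖X j‖ ^ 2) := PiLp.norm_eq_of_L2 X
      have h2 : (∑ j, ‖X j‖ ^ 2) ≤ ((k : ℝ) + 1) * M₁ ^ 2 := by
        calc (∑ j, ‖X j‖ ^ 2) ≤ ∑ _j : Fin (k + 1), M₁ ^ 2 :=
              Finset.sum_le_sum fun j _ =>
                pow_le_pow_left₀ (norm_nonneg _) (hcomp j) 2
          _ = ((k : ℝ) + 1) * M₁ ^ 2 := by
              simp [Finset.sum_const, Finset.card_univ]
      rw [h1]
      calc Real.sqrt (∑ j, ‖X j‖ ^ 2) ≤ Real.sqrt (((k : ℝ) + 1) * M₁ ^ 2) :=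
            Real.sqrt_le_sqrt h2
        _ = Real.sqrt ((k : ℝ) + 1) * M₁ := by
            rw [Real.sqrt_mul (by positivity), Real.sqrt_sq hM₁.le]
    have hpb : ‖p‖ ≤ M₂ := hlambd i t htI
    -- quadC lower bound
    have hquad : εi * ‖Δ‖ ^ 2 ≤ quadC (c (i + 1)) Δ := by
      have hnorm : ‖Δ‖ ^ 2 = ∑ j, (Δ j) ^ 2 := by
        rw [EuclideanSpace.norm_eq, Real.sq_sqrt (by positivity)]
        simp [Real.norm_eq_abs, sq_abs]
      rw [hnorm, quadC, Finset.mul_sum]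
      refine Finset.sum_le_sum fun j _ => ?_
      exact mul_le_mul_of_nonneg_right (ciInf_le (hbdd (i + 1)) j) (sq_nonneg _)
    -- augmented Hamiltonian minimality at v = u i t
    have hqz : quadC (c (i + 1)) (u i t - u i t) = 0 := by simp [quadC]
    have hstep' := hstep (u i t) hu0
    rw [hqz] at hstep'
    have hHam : ∀ v : Vec m, Ham f l T t X v p = l t X v + ⟪p, f t X v⟫ := by
      intro v
      simp only [Ham]
      rw [Set.indicator_of_mem (show t ∈ Set.Iic T from htI.2)]
    have hdiff : quadC (c (i + 1)) Δ ≤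
        (l t X (u i t) + ⟪p, f t X (u i t)⟫) -
        (l t X (u (i + 1) t) + ⟪p, f t X (u (i + 1) t)⟫) := by
      rw [hHam, hHam] at hstep'
      linarith [hstep']
    have hlip := aux_ham_lip hUconv hf hl htI X p hu0 hu1
    have hlip' : (l t X (u i t) + ⟪p, f t X (u i t)⟫) -
        (l t X (u (i + 1) t) + ⟪p, f t X (u (i + 1) t)⟫)
        ≤ μ t * (‖X‖ + 1) * (‖p‖ + 1) * ‖Δ‖ := by
      have h2 : ‖u i t - u (i + 1) t‖ = ‖Δ‖ := by rw [hΔdef, norm_sub_rev]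
      calc _ ≤ ‖(l t X (u i t) + ⟪p, f t X (u i t)⟫) -
            (l t X (u (i + 1) t) + ⟪p, f t X (u (i + 1) t)⟫)‖ := le_abs_self _
        _ ≤ μ t * (‖X‖ + 1) * (‖p‖ + 1) * ‖u i t - u (i + 1) t‖ := hlip
        _ = μ t * (‖X‖ + 1) * (‖p‖ + 1) * ‖Δ‖ := by rw [h2]
    have hC : μ t * (‖X‖ + 1) * (‖p‖ + 1) ≤ μ t * M₄ := by
      have h1 : ‖X‖ + 1 ≤ 1 + Real.sqrt ((k : ℝ) + 1) * M₁ := by linarith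
      have h2 : ‖p‖ + 1 ≤ 1 + M₂ := by linarith
      calc μ t * (‖X‖ + 1) * (‖p‖ + 1)
          ≤ μ t * (1 + Real.sqrt ((k : ℝ) + 1) * M₁) * (1 + M₂) := by
            apply mul_le_mul
            · exact mul_le_mul_of_nonneg_left h1 hμ0
            · exact h2
            · positivity
            · positivity
        _ = μ t * M₄ := by rw [hM₄def]; ring
    have hmain : εi * ‖Δ‖ ^ 2 ≤ μ t * M₄ * ‖Δ‖ := by
      calc εi * ‖Δ‖ ^ 2 ≤ quadC (c (i + 1)) Δ := hquad
        _ ≤ _ := hdiff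
        _ ≤ μ t * (‖X‖ + 1) * (‖p‖ + 1) * ‖Δ‖ := hlip'
        _ ≤ μ t * M₄ * ‖Δ‖ := mul_le_mul_of_nonneg_right hC (norm_nonneg _)
    -- conclude pointwise
    have harr := aux_arith hε₀pos hε₀i (mul_nonneg hμ0 hM₄pos.le) (norm_nonneg Δ)
      (by linarith [hmain] : εi * ‖Δ‖ ^ 2 ≤ μ t * M₄ * ‖Δ‖)
    calc εi * ‖Δ‖ ^ 2 ≤ (μ t * M₄) ^ 2 / ε₀ := harr
      _ = M₄ ^ 2 / ε₀ * μ t ^ 2 := by ring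
  -- integrability
  obtain ⟨R, hR⟩ := hU.isBounded.exists_norm_le
  have hmeas : Measurable fun t => εi * ‖u (i + 1) t - u i t‖ ^ 2 :=
    (((hessa.ctrl (i + 1)).1.sub (hessa.ctrl i).1).norm.pow_const 2).const_mul εi
  have hIu : IntervalIntegrable (fun t => εi * ‖u (i + 1) t - u i t‖ ^ 2) volume t₀ T := by
    rw [intervalIntegrable_iff_integrableOn_Ioc_of_le hT.le]
    refine Integrable.mono' (g := fun _ => εi * (2 * R) ^ 2) ?_ hmeas.aestronglyMeasurable ?_
    · exact integrableOn_const measure_Ioc_lt_top.ne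
    · filter_upwards [ae_restrict_mem measurableSet_Ioc] with t htI
      have htI' : t ∈ Set.Icc t₀ T := Set.Ioc_subset_Icc_self htI
      have h1 : ‖u (i + 1) t‖ ≤ R := hR _ ((hessa.ctrl (i + 1)).2 t htI')
      have h0 : ‖u i t‖ ≤ R := hR _ ((hessa.ctrl i).2 t htI')
      have hd : ‖u (i + 1) t - u i t‖ ≤ 2 * R := by
        calc ‖u (i + 1) t - u i t‖ ≤ ‖u (i + 1) t‖ + ‖u i t‖ := norm_sub_le _ _
          _ ≤ 2 * R := by linarith
      have : ‖u (i + 1) t - u i t‖ ^ 2 ≤ (2 * R) ^ 2 :=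
        pow_le_pow_left₀ (norm_nonneg _) hd 2
      rw [Real.norm_eq_abs, abs_of_nonneg (by positivity)]
      exact mul_le_mul_of_nonneg_left this hεipos.le
  have hIμ : IntervalIntegrable (fun t => M₄ ^ 2 / ε₀ * μ t ^ 2) volume t₀ T := by
    rw [intervalIntegrable_iff_integrableOn_Ioc_of_le hT.le]
    exact (MeasureTheory.IntegrableOn.mono_set (hf.μ_L2.integrable_sq)
      Set.Ioc_subset_Icc_self).const_mul _
  have hmonoI := intervalIntegral.integral_mono_ae_restrict hT.le hIu hIμ key
  rw [intervalIntegral.integral_const_mul, intervalIntegral.integral_const_mul] at hmonoI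
  exact hmonoI
end

section
/- Under Assumption 1, let u, u' ∈ 𝒰 be two controls and let x, x' be the corresponding solutions of the delay system sharing the same initial condition φ ∈ C([−h,0];ℝⁿ), both uniformly bounded by M₁ on [t₀,T]. Then there exists a constant M > 0, depending only on f, μ, k, T − t₀, M₁ (and not on u, u'), such that sup_{t∈[t₀,T]} ‖x(t) − x'(t)‖ ≤ M·‖u − u'‖_{L²([t₀,T])}. -/
open MeasureTheory Filter Set
open scoped RealInnerProductSpace Topology

-- ===== auxiliary lemmas =====

open MeasureTheory Set intervalIntegral in

lemma gronwall_partition (t₀ T : ℝ) (hT : t₀ ≤ T) (g D : ℝ → ℝ)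
    (hg : IntegrableOn g (Set.Icc t₀ T))
    (hg0 : ∀ s ∈ Set.Icc t₀ T, 0 ≤ g s)
    (hgD : IntegrableOn (fun s => g s * D s) (Set.Icc t₀ T))
    (hDmono : MonotoneOn D (Set.Icc t₀ T))
    (hD0 : ∀ t ∈ Set.Icc t₀ T, 0 ≤ D t)
    (a : ℝ) (ha : 0 ≤ a)
    (hineq : ∀ t ∈ Set.Icc t₀ T, D t ≤ a + ∫ s in t₀..t, g s * D s) :
    ∀ t ∈ Set.Icc t₀ T,
      D t ≤ (2 + 2 * ∫ s in t₀..T, g s) ^ (⌈2 * ∫ s in t₀..T, g s⌉₊ + 1) * a := by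
  set A : ℝ := ∫ s in t₀..T, g s with hA_def
  set N : ℕ := ⌈2 * A⌉₊ + 1 with hN_def
  have ht₀mem : t₀ ∈ Set.Icc t₀ T := Set.left_mem_Icc.mpr hT
  have hTmem : T ∈ Set.Icc t₀ T := Set.right_mem_Icc.mpr hT
  have hgI : IntervalIntegrable g volume t₀ T := by
    rw [intervalIntegrable_iff_integrableOn_Icc_of_le hT]; exact hg
  have hgDI : IntervalIntegrable (fun s => g s * D s) volume t₀ T := by
    rw [intervalIntegrable_iff_integrableOn_Icc_of_le hT]; exact hgD
  have hgIsub : ∀ c d, c ∈ Set.Icc t₀ T → d ∈ Set.Icc t₀ T →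
      IntervalIntegrable g volume c d := fun c d hc hd =>
    hgI.mono_set (Set.uIcc_subset_uIcc (by rw [Set.uIcc_of_le hT]; exact hc)
      (by rw [Set.uIcc_of_le hT]; exact hd))
  have hgDIsub : ∀ c d, c ∈ Set.Icc t₀ T → d ∈ Set.Icc t₀ T →
      IntervalIntegrable (fun s => g s * D s) volume c d := fun c d hc hd =>
    hgDI.mono_set (Set.uIcc_subset_uIcc (by rw [Set.uIcc_of_le hT]; exact hc)
      (by rw [Set.uIcc_of_le hT]; exact hd))
  set G : ℝ → ℝ := fun t => ∫ s in t₀..t, g s with hG_def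
  have hGmono : MonotoneOn G (Set.Icc t₀ T) := by
    intro c hc d hd hcd
    have h1 : G c + (∫ s in c..d, g s) = G d :=
      integral_add_adjacent_intervals (hgIsub t₀ c ht₀mem hc) (hgIsub c d hc hd)
    have h2 : 0 ≤ ∫ s in c..d, g s := by
      apply intervalIntegral.integral_nonneg hcd
      intro u hu
      exact hg0 u ⟨hc.1.trans hu.1, hu.2.trans hd.2⟩
    linarith
  have hG0 : G t₀ = 0 := by simp [hG_def]
  have hGT : G T = A := rfl
  have hA0 : 0 ≤ A := by rw [← hG0]; exact hGmono ht₀mem hTmem hT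
  have hGcont : ContinuousOn G (Set.Icc t₀ T) := by
    have := continuousOn_primitive_interval (a := t₀) (b := T)
      (f := g) (μ := volume) (by rwa [Set.uIcc_of_le hT])
    rwa [Set.uIcc_of_le hT] at this
  have hGle : ∀ t ∈ Set.Icc t₀ T, G t ≤ A := fun t ht => hGT ▸ hGmono ht hTmem ht.2
  have hG0le : ∀ t ∈ Set.Icc t₀ T, 0 ≤ G t := fun t ht => hG0 ▸ hGmono ht₀mem ht ht.1
  -- crude bound on tail integrals
  have hintD : ∀ c d, c ∈ Set.Icc t₀ T → d ∈ Set.Icc t₀ T → c ≤ d →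
      (∫ s in c..d, g s * D s) ≤ (∫ s in c..d, g s) * D d := by
    intro c d hc hd hcd
    have h2 : (∫ s in c..d, g s * D s) ≤ (∫ s in c..d, g s * D d) := by
      apply intervalIntegral.integral_mono_on hcd (hgDIsub c d hc hd)
        ((hgIsub c d hc hd).mul_const _)
      intro s hs
      have hs' : s ∈ Set.Icc t₀ T := ⟨hc.1.trans hs.1, hs.2.trans hd.2⟩
      exact mul_le_mul_of_nonneg_left (hDmono hs' hd hs.2) (hg0 s hs')
    rwa [intervalIntegral.integral_mul_const] at h2
  have hNpos : (0:ℝ) < N := by positivity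
  have hstep : A / N ≤ 1 / 2 := by
    rw [div_le_div_iff₀ hNpos (by norm_num)]
    have h2A : 2 * A ≤ (N : ℝ) := by
      rw [hN_def]; push_cast
      have := Nat.le_ceil (2 * A)
      linarith
    linarith
  -- choose partition points
  have hσ : ∀ i : ℕ, ∃ σ ∈ Set.Icc t₀ T, G σ = min (i * (A / N)) A := by
    intro i
    have hmem : min (i * (A / N)) A ∈ Set.Icc (G t₀) (G T) := by
      rw [hG0, hGT]
      refine ⟨le_min (by positivity) hA0, min_le_right _ _⟩
    obtain ⟨σ, hσ1, hσ2⟩ := intermediate_value_Icc hT hGcont hmem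
    exact ⟨σ, hσ1, hσ2⟩
  choose σ hσmem hσval using hσ
  have hlev_le : ∀ x y : ℝ, y ≤ x → min x A - min y A ≤ x - y := by
    intro x y hxy
    rcases le_total x A with h | h
    · rw [min_eq_left h, min_eq_left (hxy.trans h)]
    · rcases le_total y A with h2 | h2
      · rw [min_eq_right h, min_eq_left h2]; linarith
      · rw [min_eq_right h, min_eq_right h2]; linarith
  -- key induction
  have key : ∀ i : ℕ, ∀ t ∈ Set.Icc t₀ T, G t ≤ min (i * (A / N)) A →
      D t ≤ (2 + 2 * A) ^ i * a := by
    intro i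
    induction i with
    | zero =>
      intro t ht hGt
      simp only [Nat.cast_zero, zero_mul, min_eq_left hA0] at hGt
      have h1 := hineq t ht
      have h2 := hintD t₀ t ht₀mem ht ht.1
      have hGt0 : G t = 0 := le_antisymm hGt (hG0le t ht)
      have h3 : (∫ s in t₀..t, g s) = G t := rfl
      rw [h3, hGt0, zero_mul] at h2
      have hDt0 := hD0 t ht
      have h4 : (∫ s in t₀..t, g s * D s) ≤ 0 := by nlinarith
      simpa using (h1.trans (by linarith))
    | succ i ih =>
      intro t ht hGt
      have hbase1 : (1:ℝ) ≤ 2 + 2 * A := by linarith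
      have hpow1 : (1:ℝ) ≤ (2 + 2 * A) ^ i := one_le_pow₀ hbase1
      by_cases hcase : G t ≤ min (i * (A / N)) A
      · refine (ih t ht hcase).trans ?_
        have : (2 + 2*A) ^ i ≤ (2 + 2*A) ^ (i+1) :=
          pow_le_pow_right₀ hbase1 (Nat.le_succ i)
        exact mul_le_mul_of_nonneg_right this ha
      · push_neg at hcase
        have hσt : σ i ≤ t := by
          by_contra hlt
          push_neg at hlt
          have := hGmono ht (hσmem i) hlt.le
          rw [hσval i] at this
          linarith
        have hσiT : σ i ∈ Set.Icc t₀ T := hσmem i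
        set Bi : ℝ := (2 + 2 * A) ^ i * a with hBi_def
        have hBi0 : 0 ≤ Bi := by positivity
        have hsplit : (∫ s in t₀..t, g s * D s)
            = (∫ s in t₀..σ i, g s * D s) + ∫ s in σ i..t, g s * D s :=
          (integral_add_adjacent_intervals (hgDIsub t₀ (σ i) ht₀mem hσiT)
            (hgDIsub (σ i) t hσiT ht)).symm
        -- part 1
        have h1 : (∫ s in t₀..σ i, g s * D s) ≤ (∫ s in t₀..σ i, g s * Bi) := by
          apply intervalIntegral.integral_mono_on hσiT.1
            (hgDIsub t₀ (σ i) ht₀mem hσiT) ((hgIsub t₀ (σ i) ht₀mem hσiT).mul_const _)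
          intro s hs
          have hs' : s ∈ Set.Icc t₀ T := ⟨hs.1, hs.2.trans hσiT.2⟩
          have hDs : D s ≤ Bi := by
            apply ih s hs'
            calc G s ≤ G (σ i) := hGmono hs' hσiT hs.2
              _ = _ := hσval i
          exact mul_le_mul_of_nonneg_left hDs (hg0 s hs')
        have h1' : (∫ s in t₀..σ i, g s * Bi) ≤ A * Bi := by
          rw [intervalIntegral.integral_mul_const]
          have : G (σ i) ≤ A := hGle _ hσiT
          exact mul_le_mul_of_nonneg_right this hBi0
        -- part 2
        have hGdiff : (∫ s in σ i..t, g s) = G t - G (σ i) := by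
          have := integral_add_adjacent_intervals (hgIsub t₀ (σ i) ht₀mem hσiT)
            (hgIsub (σ i) t hσiT ht)
          have e1 : (∫ s in t₀..σ i, g s) = G (σ i) := rfl
          have e2 : (∫ s in t₀..t, g s) = G t := rfl
          rw [e1, e2] at this; linarith
        have hGsmall : (∫ s in σ i..t, g s) ≤ 1 / 2 := by
          rw [hGdiff, hσval i]
          have h5 : G t - min (i * (A/N)) A ≤ min ((i+1 : ℕ) * (A/N)) A - min (i * (A/N)) A := by
            have : G t ≤ min ((i+1 : ℕ) * (A/N)) A := hGt
            linarith
          have h6 := hlev_le ((i+1 : ℕ) * (A/N)) (i * (A/N))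
            (by
              have hc : (0:ℝ) ≤ A / N := by positivity
              apply mul_le_mul_of_nonneg_right _ hc
              exact_mod_cast Nat.le_succ i)
          have h7 : ((i+1 : ℕ) : ℝ) * (A/N) - (i : ℝ) * (A/N) = A / N := by push_cast; ring
          calc G t - min (i * (A/N)) A
              ≤ min ((i+1 : ℕ) * (A/N)) A - min (i * (A/N)) A := h5
            _ ≤ ((i+1 : ℕ) : ℝ) * (A/N) - (i : ℝ) * (A/N) := h6
            _ = A / N := h7
            _ ≤ 1 / 2 := hstep
        have h2 : (∫ s in σ i..t, g s * D s) ≤ (1/2) * D t := by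
          have := hintD (σ i) t hσiT ht hσt
          have hDt0 : 0 ≤ D t := hD0 t ht
          have h8 : (∫ s in σ i..t, g s) * D t ≤ (1/2) * D t :=
            mul_le_mul_of_nonneg_right hGsmall hDt0
          linarith
        have hfin := hineq t ht
        rw [hsplit] at hfin
        have hDt : D t ≤ 2 * a + 2 * A * Bi := by linarith
        have : 2 * a + 2 * A * Bi ≤ (2 + 2 * A) ^ (i+1) * a := by
          rw [pow_succ, hBi_def]
          nlinarith
        linarith
  -- conclusion
  intro t ht
  apply key N t ht
  have : (N : ℝ) * (A / N) = A := by field_simp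
  rw [this, min_self]
  exact hGle t ht


noncomputable section Helpers

open MeasureTheory Set

variable {n m k : ℕ} {F : Type*} [NormedAddCommGroup F] [NormedSpace ℝ F]

/-- The injection of the `i`-th block as a continuous linear map. -/
def blkCLM (i : Fin (k + 1)) : Vec n →L[ℝ] XVec k n :=
  ((PiLp.continuousLinearEquiv 2 ℝ (fun _ : Fin (k + 1) => Vec n)).symm :
      (∀ _ : Fin (k + 1), Vec n) →L[ℝ] XVec k n).comp
    (ContinuousLinearMap.pi (Pi.single i (ContinuousLinearMap.id ℝ (Vec n))))

lemma blkCLM_apply (i j : Fin (k + 1)) (ξ : Vec n) :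
    blkCLM i ξ j = if j = i then ξ else 0 := by
  have e : blkCLM i ξ j =
      ((Pi.single (M := fun _ : Fin (k + 1) => Vec n →L[ℝ] Vec n) i
        (ContinuousLinearMap.id ℝ (Vec n))) j) ξ := rfl
  rw [e]
  by_cases h : j = i
  · subst h; simp
  · simp [Pi.single, Function.update_apply, h]

lemma updX_eq_add (X : XVec k n) (i : Fin (k + 1)) (ξ : Vec n) :
    updX X i ξ = X + blkCLM i (ξ - X i) := by
  refine PiLp.ext fun j => ?_
  by_cases h : j = i
  · subst h
    simp [updX, Function.update_apply, blkCLM_apply, PiLp.add_apply]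
  · simp [updX, Function.update_apply, h, blkCLM_apply, PiLp.add_apply]

lemma hasFDerivAt_updX (X : XVec k n) (i : Fin (k + 1)) :
    HasFDerivAt (fun ξ => updX X i ξ) (blkCLM i) (X i) := by
  have : (fun ξ => updX X i ξ) = fun ξ => X + blkCLM i (ξ - X i) := by
    funext ξ; exact updX_eq_add X i ξ
  rw [this]
  have h1 : HasFDerivAt (fun ξ : Vec n => ξ - X i) (ContinuousLinearMap.id ℝ (Vec n)) (X i) :=
    (hasFDerivAt_id (X i)).sub_const (X i)
  have h2 := ((blkCLM i).hasFDerivAt.comp (X i) h1).const_add X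
  simpa using h2

lemma sum_blkCLM (h : XVec k n) : ∑ i, blkCLM i (h i) = h := by
  refine PiLp.ext fun j => ?_
  have : (∑ i, blkCLM i (h i)) j = ∑ i, blkCLM i (h i) j := by
    rw [WithLp.ofLp_sum, Finset.sum_apply]
  rw [this]
  simp only [blkCLM_apply]
  simp

lemma fderiv_decomp (ψ : XVec k n → Vec m → F)
    (hψ : Differentiable ℝ (fun q : XVec k n × Vec m => ψ q.1 q.2))
    (X : XVec k n) (v : Vec m) (h : XVec k n) (w : Vec m) :
    fderiv ℝ (fun q : XVec k n × Vec m => ψ q.1 q.2) (X, v) (h, w)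
      = (∑ i, pdX ψ i X v (h i)) + pdU ψ X v w := by
  set F2 : XVec k n × Vec m → F := fun q => ψ q.1 q.2 with hF2
  set D : XVec k n × Vec m →L[ℝ] F := fderiv ℝ F2 (X, v) with hD_def
  have hD : HasFDerivAt F2 D (X, v) := (hψ (X, v)).hasFDerivAt
  have hpdU : pdU ψ X v = D.comp (ContinuousLinearMap.inr ℝ (XVec k n) (Vec m)) := by
    have := hD.comp v (hasFDerivAt_prodMk_right X v)
    exact this.fderiv
  have hpdX : ∀ i, pdX ψ i X v = D.comp ((blkCLM i).prod 0) := by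
    intro i
    have hupd : HasFDerivAt (fun ξ => (updX X i ξ, v)) ((blkCLM i).prod 0) (X i) :=
      (hasFDerivAt_updX X i).prodMk (hasFDerivAt_const v (X i))
    have hXX : updX X i (X i) = X := by simp [updX]
    have hD' : HasFDerivAt F2 D (updX X i (X i), v) := by rw [hXX]; exact hD
    exact (hD'.comp (X i) hupd).fderiv
  have e1 : ∀ i, pdX ψ i X v (h i) = D (blkCLM i (h i), 0) := by
    intro i; rw [hpdX i]; rfl
  have e2 : pdU ψ X v w = D (0, w) := by rw [hpdU]; rfl
  simp only [e1, e2]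
  have e3 : ∑ i, D (blkCLM i (h i), (0 : Vec m)) = D (h, 0) := by
    rw [← map_sum]
    congr 1
    have : (∑ i, ((blkCLM i (h i) : XVec k n), (0 : Vec m)))
        = ((∑ i, blkCLM i (h i) : XVec k n), (0 : Vec m)) := by
      rw [Prod.ext_iff]
      constructor
      · rw [Prod.fst_sum]
      · rw [Prod.snd_sum]; simp
    rw [this, sum_blkCLM]
  rw [e3, ← map_add]
  congr 1
  simp

lemma norm_block_le (X : XVec k n) (i : Fin (k + 1)) : ‖X i‖ ≤ ‖X‖ := by
  have h1 : ‖X‖ ^ 2 = ∑ j, ‖X j‖ ^ 2 := PiLp.norm_sq_eq_of_L2 _ X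
  have h2 : ‖X i‖ ^ 2 ≤ ∑ j, ‖X j‖ ^ 2 :=
    Finset.single_le_sum (f := fun j => ‖X j‖ ^ 2) (fun j _ => sq_nonneg _)
      (Finset.mem_univ i)
  nlinarith [norm_nonneg X, norm_nonneg (X i)]

lemma norm_le_sum_blocks (X : XVec k n) : ‖X‖ ≤ ∑ j, ‖X j‖ := by
  have h1 : ‖X‖ ^ 2 = ∑ j, ‖X j‖ ^ 2 := PiLp.norm_sq_eq_of_L2 _ X
  have h2 : ∑ j, ‖X j‖ ^ 2 ≤ (∑ j, ‖X j‖) ^ 2 :=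
    Finset.sum_sq_le_sq_sum_of_nonneg (fun j _ => norm_nonneg _)
  have h3 : (0:ℝ) ≤ ∑ j, ‖X j‖ := Finset.sum_nonneg fun j _ => norm_nonneg _
  nlinarith [norm_nonneg X]

lemma fderiv_joint_norm_le (ψ : XVec k n → Vec m → F)
    (hψ : Differentiable ℝ (fun q : XVec k n × Vec m => ψ q.1 q.2))
    (X : XVec k n) (v : Vec m) (C : ℝ) (hC : 0 ≤ C)
    (hX : ∀ i, ‖pdX ψ i X v‖ ≤ C) (hU : ‖pdU ψ X v‖ ≤ C) :
    ‖fderiv ℝ (fun q : XVec k n × Vec m => ψ q.1 q.2) (X, v)‖ ≤ ((k : ℝ) + 2) * C := by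
  apply ContinuousLinearMap.opNorm_le_bound _ (by positivity)
  rintro ⟨h, w⟩
  rw [fderiv_decomp ψ hψ X v h w]
  have hq : ∀ i, ‖h i‖ ≤ ‖(h, w)‖ := by
    intro i
    exact (norm_block_le h i).trans (norm_fst_le (h, w))
  have hw : ‖w‖ ≤ ‖(h, w)‖ := norm_snd_le (h, w)
  calc ‖(∑ i, pdX ψ i X v (h i)) + pdU ψ X v w‖
      ≤ ‖∑ i, pdX ψ i X v (h i)‖ + ‖pdU ψ X v w‖ := norm_add_le _ _
    _ ≤ (∑ i : Fin (k+1), C * ‖(h, w)‖) + C * ‖(h, w)‖ := by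
        gcongr
        · refine (norm_sum_le _ _).trans ?_
          apply Finset.sum_le_sum
          intro i _
          calc ‖pdX ψ i X v (h i)‖ ≤ ‖pdX ψ i X v‖ * ‖h i‖ :=
                ContinuousLinearMap.le_opNorm _ _
            _ ≤ C * ‖(h, w)‖ := mul_le_mul (hX i) (hq i) (norm_nonneg _) hC
        · calc ‖pdU ψ X v w‖ ≤ ‖pdU ψ X v‖ * ‖w‖ := ContinuousLinearMap.le_opNorm _ _
            _ ≤ C * ‖(h, w)‖ := mul_le_mul hU hw (norm_nonneg _) hC
    _ = ((k : ℝ) + 2) * C * ‖(h, w)‖ := by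
        rw [Finset.sum_const]
        simp [Finset.card_univ]
        ring

lemma f_lip {f : ℝ → XVec k n → Vec m → Vec n} {U : Set (Vec m)} {t₀ T : ℝ} {μ : ℝ → ℝ}
    (hf : Assumption1 f U t₀ T μ) (hUconv : Convex ℝ U)
    {t : ℝ} (ht : t ∈ Set.Icc t₀ T) (R : ℝ) (hR : 0 ≤ R)
    {X X' : XVec k n} (hX : ‖X‖ ≤ R) (hX' : ‖X'‖ ≤ R)
    {v v' : Vec m} (hv : v ∈ U) (hv' : v' ∈ U) :
    ‖f t X v - f t X' v'‖ ≤ (μ t * ((R + 1) * ((k:ℝ) + 2))) * (‖X - X'‖ + ‖v - v'‖) := by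
  set S : Set (XVec k n × Vec m) := Metric.closedBall 0 R ×ˢ U with hS_def
  have hconv : Convex ℝ S := (convex_closedBall _ _).prod hUconv
  have hdiff : Differentiable ℝ (fun q : XVec k n × Vec m => f t q.1 q.2) :=
    (hf.smooth t).differentiable (by norm_num)
  have hμ0 := hf.μ_nonneg t
  have hC0 : 0 ≤ μ t * (R + 1) := mul_nonneg hμ0 (by linarith)
  have hbound : ∀ q ∈ S, ‖fderiv ℝ (fun q : XVec k n × Vec m => f t q.1 q.2) q‖
      ≤ ((k:ℝ) + 2) * (μ t * (R + 1)) := by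
    rintro ⟨Y, w⟩ ⟨hY, hw⟩
    have hYR : ‖Y‖ ≤ R := by simpa using mem_closedBall_zero_iff.mp hY
    have hle : μ t * (‖Y‖ + 1) ≤ μ t * (R + 1) :=
      mul_le_mul_of_nonneg_left (by linarith) hμ0
    exact fderiv_joint_norm_le (f t) hdiff Y w (μ t * (R + 1)) hC0
      (fun i => (hf.bd_X t ht Y w hw i).trans hle) ((hf.bd_U t ht Y w hw).trans hle)
  have hXS : (X, v) ∈ S := ⟨mem_closedBall_zero_iff.mpr hX, hv⟩
  have hX'S : (X', v') ∈ S := ⟨mem_closedBall_zero_iff.mpr hX', hv'⟩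
  have hkey := hconv.norm_image_sub_le_of_norm_fderiv_le
    (fun q _ => hdiff q) hbound hX'S hXS
  have hnorm : ‖((X, v) : XVec k n × Vec m) - (X', v')‖ ≤ ‖X - X'‖ + ‖v - v'‖ := by
    have e : ((X, v) : XVec k n × Vec m) - (X', v') = (X - X', v - v') := rfl
    rw [e, Prod.norm_def]
    apply max_le
    · simp only []
      linarith [norm_nonneg (v - v')]
    · simp only []
      linarith [norm_nonneg (X - X')]
  calc ‖f t X v - f t X' v'‖
      ≤ ((k:ℝ) + 2) * (μ t * (R + 1)) * ‖((X, v) : XVec k n × Vec m) - (X', v')‖ := hkey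
    _ ≤ ((k:ℝ) + 2) * (μ t * (R + 1)) * (‖X - X'‖ + ‖v - v'‖) := by
        apply mul_le_mul_of_nonneg_left hnorm
        positivity
    _ = (μ t * ((R + 1) * ((k:ℝ) + 2))) * (‖X - X'‖ + ‖v - v'‖) := by ring

end Helpers

/-- Lipschitz-type estimate of the state discrepancy in terms of the `L²` control
discrepancy: `sup_{[t₀,T]} ‖x - x'‖ ≤ M ‖u - u'‖_L²`, with `M` independent of the
controls. -/
theorem state_discrepancy_estimate
    {n m k : ℕ} (t₀ T hmax : ℝ) (hdel : Fin (k + 1) → ℝ) (U : Set (Vec m))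
    (f : ℝ → XVec k n → Vec m → Vec n) (l : ℝ → XVec k n → Vec m → ℝ) (μ : ℝ → ℝ)
    (ht₀ : 0 ≤ t₀) (hT : t₀ < T)
    (hdel0 : hdel 0 = 0) (hmono : StrictMono hdel) (hlast : hdel (Fin.last k) = hmax)
    (hU : IsCompact U) (hUconv : Convex ℝ U) (hUne : U.Nonempty)
    (hf : Assumption1 f U t₀ T μ) (hl : Assumption1 l U t₀ T μ)
    (φ : ℝ → Vec n) (hφ : ContinuousOn φ (Set.Icc (-hmax) (0 : ℝ)))
    (M₁ : ℝ) (hM₁ : 0 < M₁) :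
    ∃ M > (0 : ℝ), ∀ (u u' : ℝ → Vec m) (x x' : ℝ → Vec n),
      IsControl U t₀ T u → IsControl U t₀ T u' →
      IsSolution f t₀ T hmax hdel φ u x → IsSolution f t₀ T hmax hdel φ u' x' →
      (∀ t ∈ Set.Icc t₀ T, ‖x t‖ ≤ M₁) → (∀ t ∈ Set.Icc t₀ T, ‖x' t‖ ≤ M₁) →
      ∀ t ∈ Set.Icc t₀ T, ‖x t - x' t‖ ≤ M * dL2 t₀ T u u' := by
  classical
  have hTle : t₀ ≤ T := hT.le
  have hdel_nonneg : ∀ j, 0 ≤ hdel j := fun j => hdel0 ▸ hmono.monotone (Fin.zero_le j)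
  have hdel_le : ∀ j, hdel j ≤ hmax := fun j => hlast ▸ hmono.monotone (Fin.le_last j)
  have hmax0 : 0 ≤ hmax := (hdel_nonneg _).trans (hdel_le 0)
  obtain ⟨Cφ0, hCφ0⟩ := (isCompact_Icc (a := -hmax) (b := (0:ℝ))).exists_bound_of_continuousOn hφ
  set K : ℝ := max M₁ (max Cφ0 0) with hK_def
  have hKM : M₁ ≤ K := le_max_left _ _
  have hKC : Cφ0 ≤ K := (le_max_left _ _).trans (le_max_right _ _)
  have hK0 : (0:ℝ) ≤ K := (le_max_right _ _).trans (le_max_right _ _)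
  set R : ℝ := ((k:ℝ) + 1) * K with hR_def
  have hR0 : 0 ≤ R := by positivity
  set c₀ : ℝ := (R + 1) * ((k:ℝ) + 2) with hc₀_def
  have hc₀0 : 0 ≤ c₀ := by positivity
  set Lf : ℝ → ℝ := fun s => μ s * c₀ with hLf_def
  have hLf0 : ∀ s, 0 ≤ Lf s := fun s => mul_nonneg (hf.μ_nonneg s) hc₀0
  set g : ℝ → ℝ := fun s => ((k:ℝ) + 1) * Lf s with hg_def
  have hg0 : ∀ s, 0 ≤ g s := fun s => mul_nonneg (by positivity) (hLf0 s)
  set ν : Measure ℝ := volume.restrict (Set.Icc t₀ T) with hν_def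
  haveI : IsFiniteMeasure ν := by
    constructor
    rw [hν_def, Measure.restrict_apply_univ]
    exact measure_Icc_lt_top
  have hμInt : Integrable μ ν := hf.μ_L2.integrable (by norm_num)
  have hLfInt : Integrable Lf ν := hμInt.mul_const c₀
  have hgInt : Integrable g ν := hLfInt.const_mul _
  -- constants
  set Ag : ℝ := ∫ s in t₀..T, g s with hAg_def
  set Kg : ℝ := (2 + 2 * Ag) ^ (⌈2 * Ag⌉₊ + 1) with hKg_def
  have hAg0 : 0 ≤ Ag := intervalIntegral.integral_nonneg hTle (fun s _ => hg0 s)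
  have hKg0 : (0:ℝ) < Kg := by positivity
  set CL : ℝ := (∫ s, Lf s ^ 2 ∂ν) ^ ((1:ℝ)/2) with hCL_def
  have hCL0 : 0 ≤ CL := Real.rpow_nonneg (integral_nonneg (fun s => sq_nonneg _)) _
  refine ⟨Kg * CL + 1, by positivity, ?_⟩
  intro u u' x x' hu hu' hx hx' hbx hbx'
  obtain ⟨hx_init, hx_int, hx_eq⟩ := hx
  obtain ⟨hx'_init, hx'_int, hx'_eq⟩ := hx'
  set F : ℝ → Vec n := fun s => f s (Xh hdel x s) (u s) with hF_def
  set F' : ℝ → Vec n := fun s => f s (Xh hdel x' s) (u' s) with hF'_def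
  -- the state tuples stay in the ball of radius R
  have hblock : ∀ (y : ℝ → Vec n), (∀ r ∈ Set.Icc t₀ T, ‖y r‖ ≤ M₁) →
      (∀ θ ∈ Set.Icc (-hmax) (0:ℝ), y (t₀ + θ) = φ θ) →
      ∀ s ∈ Set.Icc t₀ T, ∀ j, ‖y (s - hdel j)‖ ≤ K := by
    intro y hb hi s hs j
    rcases le_total t₀ (s - hdel j) with hc | hc
    · exact (hb _ ⟨hc, by linarith [hdel_nonneg j, hs.2]⟩).trans hKM
    · have hθ : s - hdel j - t₀ ∈ Set.Icc (-hmax) (0:ℝ) :=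
        ⟨by linarith [hdel_le j, hs.1], by linarith⟩
      have harg : t₀ + (s - hdel j - t₀) = s - hdel j := by ring
      have hyφ : y (t₀ + (s - hdel j - t₀)) = φ (s - hdel j - t₀) := hi _ hθ
      rw [harg] at hyφ
      rw [hyφ]; exact (hCφ0 _ hθ).trans hKC
  have hXhR : ∀ (y : ℝ → Vec n), (∀ r ∈ Set.Icc t₀ T, ‖y r‖ ≤ M₁) →
      (∀ θ ∈ Set.Icc (-hmax) (0:ℝ), y (t₀ + θ) = φ θ) →
      ∀ s ∈ Set.Icc t₀ T, ‖Xh hdel y s‖ ≤ R := by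
    intro y hb hi s hs
    refine (norm_le_sum_blocks _).trans ?_
    have : ∀ j : Fin (k+1), ‖Xh hdel y s j‖ ≤ K := fun j => hblock y hb hi s hs j
    calc ∑ j, ‖Xh hdel y s j‖ ≤ ∑ _j : Fin (k+1), K := Finset.sum_le_sum fun j _ => this j
      _ = ((k:ℝ) + 1) * K := by
          rw [Finset.sum_const, Finset.card_univ]
          simp

  -- discrepancy function and its running sup
  set v : ℝ → ℝ := fun r => ‖x r - x' r‖ with hv_def
  set clamp : ℝ → ℝ := fun t => max t₀ (min t T) with hclamp_def
  have hclamp_mem : ∀ t, clamp t ∈ Set.Icc t₀ T :=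
    fun t => ⟨le_max_left _ _, max_le hTle (min_le_right _ _)⟩
  have hclamp_eq : ∀ t ∈ Set.Icc t₀ T, clamp t = t := by
    intro t ht
    rw [hclamp_def]
    simp only []
    rw [min_eq_left ht.2, max_eq_right ht.1]
  have hclamp_ge : ∀ t, t₀ ≤ clamp t := fun t => le_max_left _ _
  have hvb : ∀ r ∈ Set.Icc t₀ T, v r ≤ 2 * M₁ := by
    intro r hr
    calc v r ≤ ‖x r‖ + ‖x' r‖ := norm_sub_le _ _
      _ ≤ 2 * M₁ := by linarith [hbx r hr, hbx' r hr]
  set D : ℝ → ℝ := fun t => sSup (v '' Set.Icc t₀ (clamp t)) with hD_def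
  have hbdd : ∀ t, BddAbove (v '' Set.Icc t₀ (clamp t)) := by
    intro t
    refine ⟨2 * M₁, ?_⟩
    rintro _ ⟨r, hr, rfl⟩
    exact hvb r ⟨hr.1, hr.2.trans (hclamp_mem t).2⟩
  have hne : ∀ t, (v '' Set.Icc t₀ (clamp t)).Nonempty :=
    fun t => ⟨v t₀, Set.mem_image_of_mem v ⟨le_refl _, hclamp_ge t⟩⟩
  have hDmono : Monotone D := by
    intro s t hst
    apply csSup_le_csSup (hbdd t) (hne s)
    apply Set.image_mono
    apply Set.Icc_subset_Icc le_rfl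
    exact max_le_max le_rfl (min_le_min hst le_rfl)
  have hDle : ∀ t c, (∀ r ∈ Set.Icc t₀ (clamp t), v r ≤ c) → D t ≤ c := by
    intro t c hc
    apply csSup_le (hne t)
    rintro _ ⟨r, hr, rfl⟩
    exact hc r hr
  have hvD : ∀ r ∈ Set.Icc t₀ T, v r ≤ D r := by
    intro r hr
    apply le_csSup (hbdd r)
    exact Set.mem_image_of_mem v ⟨hr.1, (hclamp_eq r hr).symm ▸ le_refl r⟩
  have hD0 : ∀ t, 0 ≤ D t := by
    intro t
    have h1 : v t₀ ∈ v '' Set.Icc t₀ (clamp t) :=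
      Set.mem_image_of_mem v ⟨le_refl _, hclamp_ge t⟩
    exact (norm_nonneg _).trans (le_csSup (hbdd t) h1)
  have hDb : ∀ t, D t ≤ 2 * M₁ := by
    intro t
    apply hDle
    intro r hr
    exact hvb r ⟨hr.1, hr.2.trans (hclamp_mem t).2⟩
  have hDmeas : Measurable D := hDmono.measurable
  -- integrability of the products
  have hwMeas : Measurable (fun s => ‖u s - u' s‖) := (hu.1.sub hu'.1).norm
  obtain ⟨CU, hCU⟩ := hU.exists_bound_of_continuousOn continuousOn_id
  have hwBdd : ∀ᵐ s ∂ν, ‖‖u s - u' s‖‖ ≤ 2 * (max CU 0) := by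
    rw [hν_def]
    refine (ae_restrict_iff' measurableSet_Icc).mpr (Filter.Eventually.of_forall ?_)
    intro s hs
    rw [Real.norm_of_nonneg (norm_nonneg _)]
    have h1 : ‖u s‖ ≤ CU := hCU _ (hu.2 s hs)
    have h2 : ‖u' s‖ ≤ CU := hCU _ (hu'.2 s hs)
    calc ‖u s - u' s‖ ≤ ‖u s‖ + ‖u' s‖ := norm_sub_le _ _
      _ ≤ 2 * (max CU 0) := by
          have := le_max_left CU (0:ℝ)
          linarith
  have hLfwInt : Integrable (fun s => Lf s * ‖u s - u' s‖) ν := by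
    have h1 : Integrable (fun s => ‖u s - u' s‖ * Lf s) ν :=
      hLfInt.bdd_mul hwMeas.aestronglyMeasurable hwBdd
    have : (fun s => Lf s * ‖u s - u' s‖) = fun s => ‖u s - u' s‖ * Lf s := by
      funext s; ring
    rw [this]; exact h1
  have hDBdd : ∀ᵐ s ∂ν, ‖D s‖ ≤ 2 * M₁ := by
    refine Filter.Eventually.of_forall (fun s => ?_)
    rw [Real.norm_of_nonneg (hD0 s)]
    exact hDb s
  have hgDInt : Integrable (fun s => g s * D s) ν := by
    have h1 : Integrable (fun s => D s * g s) ν :=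
      hgInt.bdd_mul hDmeas.aestronglyMeasurable hDBdd
    have : (fun s => g s * D s) = fun s => D s * g s := by funext s; ring
    rw [this]; exact h1
  have hgDII : IntervalIntegrable (fun s => g s * D s) volume t₀ T := by
    rw [intervalIntegrable_iff_integrableOn_Icc_of_le hTle]
    exact hgDInt
  have hLfwII : IntervalIntegrable (fun s => Lf s * ‖u s - u' s‖) volume t₀ T := by
    rw [intervalIntegrable_iff_integrableOn_Icc_of_le hTle]
    exact hLfwInt
  have hIIsub : ∀ {h : ℝ → ℝ}, IntervalIntegrable h volume t₀ T → ∀ t ∈ Set.Icc t₀ T,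
      IntervalIntegrable h volume t₀ t := by
    intro h hh t ht
    apply hh.mono_set
    rw [Set.uIcc_of_le hTle, Set.uIcc_of_le ht.1]
    exact Set.Icc_subset_Icc le_rfl ht.2
  have hIIsub' : ∀ {h : ℝ → Vec n},
      IntervalIntegrable h volume t₀ T → ∀ t ∈ Set.Icc t₀ T,
      IntervalIntegrable h volume t₀ t := by
    intro h hh t ht
    apply hh.mono_set
    rw [Set.uIcc_of_le hTle, Set.uIcc_of_le ht.1]
    exact Set.Icc_subset_Icc le_rfl ht.2
  -- the set-valued L² bound `a`
  set a : ℝ := ∫ s in t₀..T, Lf s * ‖u s - u' s‖ with ha_def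
  have ha0 : 0 ≤ a := intervalIntegral.integral_nonneg hTle
    (fun s _ => mul_nonneg (hLf0 s) (norm_nonneg _))
  -- pointwise bound on the difference of integrands
  have hFF : ∀ s ∈ Set.Icc t₀ T, ‖F s - F' s‖ ≤ g s * D s + Lf s * ‖u s - u' s‖ := by
    intro s hs
    have hXx : ‖Xh hdel x s‖ ≤ R := hXhR x hbx hx_init s hs
    have hXx' : ‖Xh hdel x' s‖ ≤ R := hXhR x' hbx' hx'_init s hs
    have hlip := f_lip hf hUconv hs R hR0 hXx hXx' (hu.2 s hs) (hu'.2 s hs)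
    have hΔX : ‖Xh hdel x s - Xh hdel x' s‖ ≤ ((k:ℝ) + 1) * D s := by
      refine (norm_le_sum_blocks _).trans ?_
      have hbl : ∀ j : Fin (k+1), ‖(Xh hdel x s - Xh hdel x' s) j‖ ≤ D s := by
        intro j
        have hj : (Xh hdel x s - Xh hdel x' s) j = x (s - hdel j) - x' (s - hdel j) := rfl
        rw [hj]
        rcases le_total t₀ (s - hdel j) with hc | hc
        · have hmem : s - hdel j ∈ Set.Icc t₀ T := ⟨hc, by linarith [hdel_nonneg j, hs.2]⟩
          calc ‖x (s - hdel j) - x' (s - hdel j)‖ = v (s - hdel j) := rfl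
            _ ≤ D (s - hdel j) := hvD _ hmem
            _ ≤ D s := hDmono (by linarith [hdel_nonneg j])
        · have hθ : s - hdel j - t₀ ∈ Set.Icc (-hmax) (0:ℝ) :=
            ⟨by linarith [hdel_le j, hs.1], by linarith⟩
          have harg : t₀ + (s - hdel j - t₀) = s - hdel j := by ring
          have e1 : x (t₀ + (s - hdel j - t₀)) = φ (s - hdel j - t₀) := hx_init _ hθ
          have e2 : x' (t₀ + (s - hdel j - t₀)) = φ (s - hdel j - t₀) := hx'_init _ hθ
          rw [harg] at e1 e2
          rw [e1, e2, sub_self, norm_zero]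
          exact hD0 s
      calc ∑ j, ‖(Xh hdel x s - Xh hdel x' s) j‖ ≤ ∑ _j : Fin (k+1), D s :=
            Finset.sum_le_sum fun j _ => hbl j
        _ = ((k:ℝ) + 1) * D s := by
            rw [Finset.sum_const, Finset.card_univ]
            simp

    calc ‖F s - F' s‖ ≤ (μ s * c₀) * (‖Xh hdel x s - Xh hdel x' s‖ + ‖u s - u' s‖) := hlip
      _ ≤ (μ s * c₀) * (((k:ℝ) + 1) * D s + ‖u s - u' s‖) := by
          apply mul_le_mul_of_nonneg_left _ (mul_nonneg (hf.μ_nonneg s) hc₀0)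
          linarith
      _ = g s * D s + Lf s * ‖u s - u' s‖ := by
          rw [hg_def, hLf_def]
          ring
  -- the integral inequality for `D`
  have hineqD : ∀ t ∈ Set.Icc t₀ T, D t ≤ a + ∫ s in t₀..t, g s * D s := by
    intro t ht
    apply hDle
    rw [hclamp_eq t ht]
    intro r hr
    have hrT : r ∈ Set.Icc t₀ T := ⟨hr.1, hr.2.trans ht.2⟩
    have hsub : x r - x' r = ∫ s in t₀..r, (F s - F' s) := by
      rw [hx_eq r hrT, hx'_eq r hrT,
        intervalIntegral.integral_sub (hIIsub' hx_int r hrT) (hIIsub' hx'_int r hrT)]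
      abel
    have hFF'II : IntervalIntegrable (fun s => F s - F' s) volume t₀ r :=
      (hIIsub' hx_int r hrT).sub (hIIsub' hx'_int r hrT)
    have step2 : v r ≤ ∫ s in t₀..r, ‖F s - F' s‖ := by
      rw [hv_def]
      simp only []
      rw [hsub]
      exact intervalIntegral.norm_integral_le_integral_norm hrT.1
    have step3 : (∫ s in t₀..r, ‖F s - F' s‖)
        ≤ ∫ s in t₀..r, (g s * D s + Lf s * ‖u s - u' s‖) := by
      apply intervalIntegral.integral_mono_on hrT.1 hFF'II.norm
        ((hIIsub hgDII r hrT).add (hIIsub hLfwII r hrT))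
      intro s hs
      exact hFF s ⟨hs.1, hs.2.trans hrT.2⟩
    have step4 : (∫ s in t₀..r, (g s * D s + Lf s * ‖u s - u' s‖))
        = (∫ s in t₀..r, g s * D s) + ∫ s in t₀..r, Lf s * ‖u s - u' s‖ :=
      intervalIntegral.integral_add (hIIsub hgDII r hrT) (hIIsub hLfwII r hrT)
    have step5 : (∫ s in t₀..r, g s * D s) ≤ ∫ s in t₀..t, g s * D s := by
      have hadj : (∫ s in t₀..r, g s * D s) + (∫ s in r..t, g s * D s)
          = ∫ s in t₀..t, g s * D s :=
        intervalIntegral.integral_add_adjacent_intervals (hIIsub hgDII r hrT)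
          (hgDII.mono_set (by
            rw [Set.uIcc_of_le hTle, Set.uIcc_of_le hr.2]
            exact Set.Icc_subset_Icc hrT.1 ht.2))
      have hnn : 0 ≤ ∫ s in r..t, g s * D s :=
        intervalIntegral.integral_nonneg hr.2 (fun s _ => mul_nonneg (hg0 s) (hD0 s))
      linarith
    have step6 : (∫ s in t₀..r, Lf s * ‖u s - u' s‖) ≤ a := by
      have hadj : (∫ s in t₀..r, Lf s * ‖u s - u' s‖) + (∫ s in r..T, Lf s * ‖u s - u' s‖)
          = a :=
        intervalIntegral.integral_add_adjacent_intervals (hIIsub hLfwII r hrT)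
          (hLfwII.mono_set (by
            rw [Set.uIcc_of_le hTle, Set.uIcc_of_le hrT.2]
            exact Set.Icc_subset_Icc hrT.1 le_rfl))
      have hnn : 0 ≤ ∫ s in r..T, Lf s * ‖u s - u' s‖ :=
        intervalIntegral.integral_nonneg hrT.2 (fun s _ => mul_nonneg (hLf0 s) (norm_nonneg _))
      linarith
    calc v r ≤ ∫ s in t₀..r, ‖F s - F' s‖ := step2
      _ ≤ (∫ s in t₀..r, g s * D s) + ∫ s in t₀..r, Lf s * ‖u s - u' s‖ := by
          rw [← step4]; exact step3
      _ ≤ (∫ s in t₀..t, g s * D s) + a := add_le_add step5 step6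
      _ = a + ∫ s in t₀..t, g s * D s := by ring
  -- Grönwall
  have hgron := gronwall_partition t₀ T hTle g D hgInt
    (fun s _ => hg0 s) hgDInt (hDmono.monotoneOn _) (fun t _ => hD0 t) a ha0 hineqD
  -- Cauchy–Schwarz : a ≤ CL * dL2
  have hCS : a ≤ CL * dL2 t₀ T u u' := by
    have h2 : (ENNReal.ofReal 2) = (2 : ENNReal) := by norm_num
    have hLf2 : MemLp Lf (ENNReal.ofReal 2) ν := by
      rw [h2]
      have h1 : MemLp (fun s => c₀ * μ s) 2 ν := hf.μ_L2.const_mul c₀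
      have : Lf = fun s => c₀ * μ s := by funext s; rw [hLf_def]; ring
      rw [this]
      exact h1
    have hw2 : MemLp (fun s => ‖u s - u' s‖) (ENNReal.ofReal 2) ν := by
      rw [h2]
      exact MemLp.of_bound hwMeas.aestronglyMeasurable _ hwBdd
    have hcs := integral_mul_le_Lp_mul_Lq_of_nonneg (μ := ν)
      Real.HolderConjugate.two_two
      (Filter.Eventually.of_forall (fun s => hLf0 s))
      (Filter.Eventually.of_forall (fun s => norm_nonneg _))
      hLf2 hw2
    have hrpow : ∀ h : ℝ → ℝ, (fun s => h s ^ (2:ℝ)) = fun s => h s ^ (2:ℕ) := by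
      intro h; funext s
      rw [← Real.rpow_natCast (h s) 2]
      norm_num
    rw [hrpow Lf, hrpow (fun s => ‖u s - u' s‖)] at hcs
    have haν : a = ∫ s, Lf s * ‖u s - u' s‖ ∂ν := by
      rw [ha_def, intervalIntegral.integral_of_le hTle, hν_def,
        ← integral_Icc_eq_integral_Ioc]
    have hd2 : (∫ s, ‖u s - u' s‖ ^ (2:ℕ) ∂ν) = dL2sq t₀ T u u' := by
      rw [dL2sq, intervalIntegral.integral_of_le hTle, hν_def,
        ← integral_Icc_eq_integral_Ioc]
    have hdL2 : (∫ s, ‖u s - u' s‖ ^ (2:ℕ) ∂ν) ^ ((1:ℝ)/2) = dL2 t₀ T u u' := by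
      rw [hd2, dL2, Real.sqrt_eq_rpow]
    calc a = ∫ s, Lf s * ‖u s - u' s‖ ∂ν := haν
      _ ≤ (∫ s, Lf s ^ (2:ℕ) ∂ν) ^ ((1:ℝ)/2) * (∫ s, ‖u s - u' s‖ ^ (2:ℕ) ∂ν) ^ ((1:ℝ)/2) := by
          have e1 : (1:ℝ)/2 = 1/(2:ℝ) := by norm_num
          exact hcs
      _ = CL * dL2 t₀ T u u' := by rw [hCL_def, hdL2]
  -- conclusion
  intro t ht
  have hdL2nn : 0 ≤ dL2 t₀ T u u' := Real.sqrt_nonneg _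
  calc ‖x t - x' t‖ = v t := rfl
    _ ≤ D t := hvD t ht
    _ ≤ Kg * a := hgron t ht
    _ ≤ Kg * (CL * dL2 t₀ T u u') := mul_le_mul_of_nonneg_left hCS hKg0.le
    _ = (Kg * CL) * dL2 t₀ T u u' := by ring
    _ ≤ (Kg * CL + 1) * dL2 t₀ T u u' := by
        apply mul_le_mul_of_nonneg_right _ hdL2nn
        linarith
end

section
/- Let the delay dynamics be affine in the control, f(t,X,u) = f₀(t,X) + G(t,X)u, with f₀, G satisfying Assumption 1. Suppose (u^k)_{k≥1} ⊆ 𝒰 converges weakly in L²([t₀,T];ℝᵐ) to ū ∈ 𝒰, and the corresponding solutions x^k of the delay system (all with the same initial condition φ and uniformly bounded by M₁) converge uniformly on [t₀,T] to x̄. Then x̄ is absolutely continuous and solves the delay system with control ū: x̄(t) = φ(0) + ∫_{t₀}^t ( f₀(s, X̄_h(s)) + G(s, X̄_h(s)) ū(s) ) ds for all t ∈ [t₀,T], with x̄(t₀+θ) = φ(θ) on [−h,0]. -/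
open MeasureTheory Filter Set
open scoped RealInnerProductSpace Topology

section AuxWeakLimit

open MeasureTheory Filter Set

/-- Carathéodory composition: measurable in `t`, continuous in the second variable,
composed with a measurable function, is measurable. -/
theorem carath_meas {ι E : Type*} [TopologicalSpace ι] [TopologicalSpace.MetrizableSpace ι]
    [MeasurableSpace ι] [SecondCountableTopology ι] [OpensMeasurableSpace ι]
    {mE : MeasurableSpace E} [TopologicalSpace E] [TopologicalSpace.PseudoMetrizableSpace E] [BorelSpace E]
    (ψ : ℝ → ι → E) (hc : ∀ t, Continuous (ψ t))
    (hm : ∀ b, Measurable fun t => ψ t b) {g : ℝ → ι} (hg : Measurable g) :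
    Measurable fun t => ψ t (g t) := by
  have H := measurable_uncurry_of_continuous_of_measurable (u := fun b (t : ℝ) => ψ t b)
    (fun t => hc t) hm
  exact H.comp (hg.prodMk measurable_id)

theorem aux_toII {E : Type*} [NormedAddCommGroup E] {v : ℝ → E} {t₀ T t : ℝ}
    (h : IntegrableOn v (Set.Icc t₀ T) volume) (ht : t ∈ Set.Icc t₀ T) :
    IntervalIntegrable v volume t₀ t := by
  apply MeasureTheory.IntegrableOn.intervalIntegrable
  apply h.mono_set
  rw [Set.uIcc_of_le ht.1]
  exact Set.Icc_subset_Icc le_rfl ht.2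

theorem aux_int {E : Type*} [NormedAddCommGroup E] {v : ℝ → E} {μfn : ℝ → ℝ} {t₀ T C : ℝ}
    (hμ : IntegrableOn μfn (Set.Icc t₀ T) volume)
    (hm : AEStronglyMeasurable v (volume.restrict (Set.Icc t₀ T)))
    (hb : ∀ s ∈ Set.Icc t₀ T, ‖v s‖ ≤ μfn s * C) : IntegrableOn v (Set.Icc t₀ T) volume :=
  Integrable.mono' (hμ.mul_const C) hm (ae_restrict_of_forall_mem measurableSet_Icc hb)

end AuxWeakLimit

set_option maxHeartbeats 2000000 in
/-- For control-affine delay dynamics, uniform limits of states along a weakly `L²`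
convergent sequence of controls solve the delay system driven by the weak limit. -/
theorem affine_state_weak_limit
    {n m k : ℕ} (t₀ T hmax : ℝ) (hdel : Fin (k + 1) → ℝ) (U : Set (Vec m))
    (f : ℝ → XVec k n → Vec m → Vec n) (l : ℝ → XVec k n → Vec m → ℝ) (μ : ℝ → ℝ)
    (ht₀ : 0 ≤ t₀) (hT : t₀ < T)
    (hdel0 : hdel 0 = 0) (hmono : StrictMono hdel) (hlast : hdel (Fin.last k) = hmax)
    (hU : IsCompact U) (hUconv : Convex ℝ U) (hUne : U.Nonempty)
    (f₀ : ℝ → XVec k n → Vec n) (G : ℝ → XVec k n → (Vec m →L[ℝ] Vec n)) (μ : ℝ → ℝ)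
    (hf₀ : Assumption1X f₀ t₀ T μ) (hG : Assumption1G G t₀ T μ)
    (f : ℝ → XVec k n → Vec m → Vec n)
    (hfeq : f = fun t X v => f₀ t X + G t X v)
    (φ : ℝ → Vec n) (hφ : ContinuousOn φ (Set.Icc (-hmax) (0 : ℝ)))
    (M₁ : ℝ) (hM₁ : 0 < M₁)
    (u : ℕ → ℝ → Vec m) (hu : ∀ i, IsControl U t₀ T (u i))
    (ubar : ℝ → Vec m) (hubar : IsControl U t₀ T ubar)
    (hweak : WeakL2Conv t₀ T u ubar)
    (x : ℕ → ℝ → Vec n)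
    (hx : ∀ i, IsSolution f t₀ T hmax hdel φ (u i) (x i))
    (hbd : ∀ i, ∀ t ∈ Set.Icc t₀ T, ‖x i t‖ ≤ M₁)
    (xbar : ℝ → Vec n)
    (hunif : TendstoUniformlyOn (fun i => x i) xbar atTop (Set.Icc (t₀ - hmax) T)) :
    IsSolution f t₀ T hmax hdel φ ubar xbar := by
  classical
  subst hfeq
  letI : MeasurableSpace (XVec k n) := borel _
  haveI : BorelSpace (XVec k n) := ⟨rfl⟩
  have hT' : t₀ ≤ T := hT.le
  have h0max : 0 ≤ hmax := by
    have h := hmono.monotone (Fin.zero_le (Fin.last k))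
    rwa [hdel0, hlast] at h
  have hdelmem : ∀ j : Fin (k + 1), hdel j ∈ Set.Icc (0 : ℝ) hmax := by
    intro j
    constructor
    · rw [← hdel0]; exact hmono.monotone (Fin.zero_le j)
    · rw [← hlast]; exact hmono.monotone (Fin.le_last j)
  have hsub : ∀ {s : ℝ}, s ∈ Set.Icc t₀ T → ∀ j : Fin (k + 1),
      s - hdel j ∈ Set.Icc (t₀ - hmax) T := by
    intro s hs j
    have h1 := (hdelmem j).1
    have h2 := (hdelmem j).2
    exact ⟨by linarith [hs.1], by linarith [hs.2]⟩
  -- initial condition for xbar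
  have hinit : ∀ θ ∈ Set.Icc (-hmax) (0 : ℝ), xbar (t₀ + θ) = φ θ := by
    intro θ hθ
    have hmem : t₀ + θ ∈ Set.Icc (t₀ - hmax) T := ⟨by linarith [hθ.1], by linarith [hθ.2]⟩
    have h1 : Tendsto (fun i => x i (t₀ + θ)) atTop (𝓝 (xbar (t₀ + θ))) :=
      hunif.tendsto_at hmem
    have h2 : (fun i => x i (t₀ + θ)) = fun _ => φ θ := funext fun i => (hx i).1 θ hθ
    rw [h2] at h1
    exact (tendsto_nhds_unique h1 tendsto_const_nhds)
  -- bounds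
  obtain ⟨Mφ, hMφ⟩ :=
    (isCompact_Icc : IsCompact (Set.Icc (-hmax) (0 : ℝ))).exists_bound_of_continuousOn hφ
  have hMφ0 : 0 ≤ Mφ := le_trans (norm_nonneg (φ 0)) (hMφ 0 ⟨by linarith, le_refl 0⟩)
  set M₀ : ℝ := max M₁ Mφ with hM₀def
  have hM₀0 : 0 ≤ M₀ := le_trans hMφ0 (le_max_right _ _)
  have hbdy : ∀ y : ℝ → Vec n, (∀ θ ∈ Set.Icc (-hmax) (0 : ℝ), y (t₀ + θ) = φ θ) →
      (∀ t ∈ Set.Icc t₀ T, ‖y t‖ ≤ M₁) → ∀ r ∈ Set.Icc (t₀ - hmax) T, ‖y r‖ ≤ M₀ := by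
    intro y hy1 hy2 r hr
    by_cases hrt : t₀ ≤ r
    · exact le_trans (hy2 r ⟨hrt, hr.2⟩) (le_max_left _ _)
    · push_neg at hrt
      have hθ : r - t₀ ∈ Set.Icc (-hmax) (0 : ℝ) := ⟨by linarith [hr.1], by linarith⟩
      have hyr : y r = φ (r - t₀) := by
        have h := hy1 (r - t₀) hθ
        rwa [show t₀ + (r - t₀) = r by ring] at h
      rw [hyr]
      exact le_trans (hMφ _ hθ) (le_max_right _ _)
  have hbdxbar : ∀ r ∈ Set.Icc (t₀ - hmax) T, ‖xbar r‖ ≤ M₀ := by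
    apply hbdy xbar hinit
    intro s hs
    have h1 : Tendsto (fun i => ‖x i s‖) atTop (𝓝 ‖xbar s‖) :=
      (hunif.tendsto_at ⟨by linarith [hs.1], hs.2⟩).norm
    exact le_of_tendsto h1 (Filter.Eventually.of_forall fun i => hbd i s hs)
  have hbdxi : ∀ i, ∀ r ∈ Set.Icc (t₀ - hmax) T, ‖x i r‖ ≤ M₀ := fun i =>
    hbdy (x i) (hx i).1 (hbd i)
  set MX : ℝ := Real.sqrt ((k : ℝ) + 1) * M₀ with hMXdef
  have hMX0 : 0 ≤ MX := mul_nonneg (Real.sqrt_nonneg _) hM₀0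
  have hXhbd : ∀ y : ℝ → Vec n, (∀ r ∈ Set.Icc (t₀ - hmax) T, ‖y r‖ ≤ M₀) →
      ∀ s ∈ Set.Icc t₀ T, ‖Xh hdel y s‖ ≤ MX := by
    intro y hy s hs
    rw [PiLp.norm_eq_of_L2]
    have hsum : ∑ j, ‖Xh hdel y s j‖ ^ 2 ≤ ∑ _j : Fin (k + 1), M₀ ^ 2 := by
      apply Finset.sum_le_sum
      intro j _
      exact pow_le_pow_left₀ (norm_nonneg _) (hy _ (hsub hs j)) 2
    calc Real.sqrt (∑ j, ‖Xh hdel y s j‖ ^ 2)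
        ≤ Real.sqrt (∑ _j : Fin (k + 1), M₀ ^ 2) := Real.sqrt_le_sqrt hsum
      _ = MX := by
          rw [Finset.sum_const, Finset.card_univ, Fintype.card_fin, nsmul_eq_mul]
          rw [show ((k + 1 : ℕ) : ℝ) = (k : ℝ) + 1 by push_cast; ring]
          rw [Real.sqrt_mul (by positivity), Real.sqrt_sq hM₀0]
  obtain ⟨MU, hMU⟩ := isBounded_iff_forall_norm_le.1 hU.isBounded
  have hMU0 : 0 ≤ MU := le_trans (norm_nonneg _) (hMU _ hUne.choose_spec)
  -- μ integrability
  have hμint : IntegrableOn μ (Set.Icc t₀ T) volume :=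
    memLp_one_iff_integrable.1 (hf₀.μ_L2.mono_exponent one_le_two)
  -- continuity of solutions on [t₀, T]
  have hcontSol : ∀ (w : ℝ → Vec m) (y : ℝ → Vec n),
      IsSolution (fun t X v => f₀ t X + G t X v) t₀ T hmax hdel φ w y →
      ContinuousOn y (Set.Icc t₀ T) := by
    intro w y hy
    have h1 := intervalIntegral.continuousOn_primitive_interval' hy.2.1
      (by rw [Set.uIcc_of_le hT']; exact Set.left_mem_Icc.2 hT')
    rw [Set.uIcc_of_le hT'] at h1
    have h2 : ContinuousOn
        (fun t => φ 0 + ∫ s in t₀..t,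
          (fun t X v => f₀ t X + G t X v) s (Xh hdel y s) (w s)) (Set.Icc t₀ T) :=
      continuousOn_const.add h1
    exact h2.congr fun s hs => hy.2.2 s hs
  have hcxbar : ContinuousOn xbar (Set.Icc t₀ T) := by
    have hmono' : Set.Icc t₀ T ⊆ Set.Icc (t₀ - hmax) T :=
      Set.Icc_subset_Icc (by linarith) le_rfl
    exact (hunif.mono hmono').continuousOn
      (Filter.Eventually.of_forall fun i => hcontSol (u i) (x i) (hx i)).frequently
  -- extension machine
  have hmk : ∀ y : ℝ → Vec n, ContinuousOn y (Set.Icc t₀ T) →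
      (∀ θ ∈ Set.Icc (-hmax) (0 : ℝ), y (t₀ + θ) = φ θ) →
      ∃ Y : ℝ → XVec k n, Continuous Y ∧ ∀ s ∈ Set.Icc t₀ T, Y s = Xh hdel y s := by
    intro y hyc hyi
    have hneg : (-hmax) ≤ (0 : ℝ) := by linarith
    set φe : ℝ → Vec n := Set.IccExtend hneg ((Set.Icc (-hmax) (0 : ℝ)).restrict φ) with hφe
    set ye : ℝ → Vec n := Set.IccExtend hT' ((Set.Icc t₀ T).restrict y) with hye
    have hφec : Continuous φe :=
      Continuous.Icc_extend' (continuousOn_iff_continuous_restrict.1 hφ)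
    have hyec : Continuous ye :=
      Continuous.Icc_extend' (continuousOn_iff_continuous_restrict.1 hyc)
    set y' : ℝ → Vec n := fun r => if t₀ ≤ r then ye r else φe (r - t₀) with hy'
    have hy'c : Continuous y' := by
      apply Continuous.if_le hyec (hφec.comp (continuous_id.sub continuous_const))
        continuous_const continuous_id
      rintro r rfl
      have h1 : ye t₀ = y t₀ := by
        rw [hye, Set.IccExtend_of_mem _ _ (Set.left_mem_Icc.2 hT')]
        rfl
      have h2 : φe (t₀ - t₀) = φ 0 := by
        rw [show t₀ - t₀ = (0 : ℝ) by ring, hφe,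
          Set.IccExtend_of_mem _ _ (Set.right_mem_Icc.2 hneg)]
        rfl
      have h3 : y t₀ = φ 0 := by
        have h4 := hyi 0 ⟨hneg, le_refl 0⟩
        rwa [add_zero] at h4
      simp only [Function.comp_apply, id_eq, Pi.sub_apply]
      rw [h1, h2, h3]
    have hy'eq : ∀ r ∈ Set.Icc (t₀ - hmax) T, y' r = y r := by
      intro r hr
      by_cases hrt : t₀ ≤ r
      · simp only [hy', if_pos hrt]
        rw [hye, Set.IccExtend_of_mem _ _ ⟨hrt, hr.2⟩]
        rfl
      · push_neg at hrt
        simp only [hy', if_neg (not_le.2 hrt)]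
        have hθ : r - t₀ ∈ Set.Icc (-hmax) (0 : ℝ) := ⟨by linarith [hr.1], by linarith⟩
        rw [hφe, Set.IccExtend_of_mem _ _ hθ]
        have h5 := hyi (r - t₀) hθ
        rw [show t₀ + (r - t₀) = r by ring] at h5
        exact h5.symm
    refine ⟨fun s => Xh hdel y' s, ?_, ?_⟩
    · refine (PiLp.continuous_toLp 2 (fun _ : Fin (k + 1) => Vec n)).comp
        (f := fun s j => y' (s - hdel j)) ?_
      apply continuous_pi
      intro j
      exact hy'c.comp (continuous_id.sub continuous_const)
    · intro s hs
      show Xh hdel y' s = Xh hdel y s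
      unfold Xh
      congr 1
      funext j
      exact hy'eq _ (hsub hs j)
  -- measurability via Carathéodory
  have hmeasf₀C : ∀ Y : ℝ → XVec k n, Continuous Y → Measurable fun s => f₀ s (Y s) := by
    intro Y hY
    exact carath_meas f₀ (fun t => (hf₀.smooth t).continuous) hf₀.meas hY.measurable
  have hmeasGC : ∀ Y : ℝ → XVec k n, Continuous Y → ∀ w : ℝ → Vec m, Measurable w →
      Measurable fun s => G s (Y s) (w s) := by
    intro Y hY w hw
    have hc : ∀ t, Continuous fun p : XVec k n × Vec m => G t p.1 p.2 := fun t =>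
      isBoundedBilinearMap_apply.continuous.comp
        (((hG.smooth t).continuous.comp continuous_fst).prodMk continuous_snd)
    exact carath_meas (fun t p => G t p.1 p.2) hc (fun p => hG.meas p.1 p.2)
      (hY.measurable.prodMk hw)
  have hmeasAdj : ∀ Y : ℝ → XVec k n, Continuous Y → ∀ r : Fin n,
      Measurable fun s =>
        ContinuousLinearMap.adjoint (G s (Y s)) (EuclideanSpace.single r (1 : ℝ)) := by
    intro Y hY r
    apply carath_meas
      (fun t X => ContinuousLinearMap.adjoint (G t X) (EuclideanSpace.single r (1 : ℝ)))
    · intro t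
      exact isBoundedBilinearMap_apply.continuous.comp
        (((ContinuousLinearMap.adjoint :
            (Vec m →L[ℝ] Vec n) ≃ₗᵢ⋆[ℝ] (Vec n →L[ℝ] Vec m)).continuous.comp
          (hG.smooth t).continuous).prodMk continuous_const)
    · intro X
      refine (WithLp.measurable_toLp 2 (Fin m → ℝ)).comp (f := fun t => WithLp.ofLp
        (ContinuousLinearMap.adjoint (G t X) (EuclideanSpace.single r (1 : ℝ)))) ?_
      apply measurable_pi_iff.2
      intro j
      have hcoord : (fun t =>
          (ContinuousLinearMap.adjoint (G t X) (EuclideanSpace.single r (1 : ℝ))) j)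
          = fun t => ⟪EuclideanSpace.single r (1 : ℝ),
              G t X (EuclideanSpace.single j (1 : ℝ))⟫ := by
        funext t
        rw [← ContinuousLinearMap.adjoint_inner_left (G t X)
          (EuclideanSpace.single j (1 : ℝ)) (EuclideanSpace.single r (1 : ℝ))]
        rw [real_inner_comm, EuclideanSpace.inner_single_left]
        simp
      rw [hcoord]
      exact Measurable.inner measurable_const (hG.meas X _)
    · exact hY.measurable
  -- packaged integrability
  have hpack : ∀ y : ℝ → Vec n, ContinuousOn y (Set.Icc t₀ T) →
      (∀ θ ∈ Set.Icc (-hmax) (0 : ℝ), y (t₀ + θ) = φ θ) →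
      (∀ r ∈ Set.Icc (t₀ - hmax) T, ‖y r‖ ≤ M₀) →
      IntegrableOn (fun s => f₀ s (Xh hdel y s)) (Set.Icc t₀ T) volume ∧
      (∀ w : ℝ → Vec m, Measurable w → (∀ s ∈ Set.Icc t₀ T, w s ∈ U) →
        IntegrableOn (fun s => G s (Xh hdel y s) (w s)) (Set.Icc t₀ T) volume) := by
    intro y hyc hyi hyb
    obtain ⟨Y, hYc, hYeq⟩ := hmk y hyc hyi
    have hXb : ∀ s ∈ Set.Icc t₀ T, ‖Xh hdel y s‖ ≤ MX := hXhbd y hyb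
    constructor
    · apply aux_int hμint
      · exact ((hmeasf₀C Y hYc).aestronglyMeasurable).congr
          (ae_restrict_of_forall_mem measurableSet_Icc fun s hs => by simp only [hYeq s hs])
      · intro s hs
        calc ‖f₀ s (Xh hdel y s)‖ ≤ μ s * (‖Xh hdel y s‖ + 1) := hf₀.bd_val s hs _
          _ ≤ μ s * (MX + 1) := by
              apply mul_le_mul_of_nonneg_left _ (hf₀.μ_nonneg s)
              linarith [hXb s hs]
    · intro w hw hwU
      apply aux_int hμint (C := (MX + 1) * MU)
      · exact ((hmeasGC Y hYc w hw).aestronglyMeasurable).congr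
          (ae_restrict_of_forall_mem measurableSet_Icc fun s hs => by simp only [hYeq s hs])
      · intro s hs
        have hμs := hG.μ_nonneg s
        calc ‖G s (Xh hdel y s) (w s)‖
            ≤ ‖G s (Xh hdel y s)‖ * ‖w s‖ := (G s (Xh hdel y s)).le_opNorm _
          _ ≤ (μ s * (MX + 1)) * MU := by
              apply mul_le_mul _ (hMU _ (hwU s hs)) (norm_nonneg _)
              · positivity
              · calc ‖G s (Xh hdel y s)‖ ≤ μ s * (‖Xh hdel y s‖ + 1) := hG.bd_val s hs _
                  _ ≤ μ s * (MX + 1) := by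
                      apply mul_le_mul_of_nonneg_left _ hμs
                      linarith [hXb s hs]
          _ = μ s * ((MX + 1) * MU) := by ring
  have hxbarP := hpack xbar hcxbar hinit hbdxbar
  have hxiP := fun i => hpack (x i) (hcontSol (u i) (x i) (hx i)) ((hx i).1) (hbdxi i)
  -- the integrand with the limit control
  have hPint : IntegrableOn
      (fun s => f₀ s (Xh hdel xbar s) + G s (Xh hdel xbar s) (ubar s))
      (Set.Icc t₀ T) volume := hxbarP.1.add (hxbarP.2 ubar hubar.1 hubar.2)
  have hPii : IntervalIntegrable
      (fun s => f₀ s (Xh hdel xbar s) + G s (Xh hdel xbar s) (ubar s)) volume t₀ T :=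
    aux_toII hPint (Set.right_mem_Icc.2 hT')
  refine ⟨hinit, hPii, ?_⟩
  intro t ht
  show xbar t = φ 0 + ∫ s in t₀..t, (f₀ s (Xh hdel xbar s) + G s (Xh hdel xbar s) (ubar s))
  -- integrabilities over [t₀, t]
  have hGxiu : ∀ i, IntegrableOn (fun s => G s (Xh hdel (x i) s) (u i s))
      (Set.Icc t₀ T) volume := fun i => (hxiP i).2 (u i) (hu i).1 (hu i).2
  have hGxbu : ∀ i, IntegrableOn (fun s => G s (Xh hdel xbar s) (u i s))
      (Set.Icc t₀ T) volume := fun i => hxbarP.2 (u i) (hu i).1 (hu i).2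
  have hGxbub : IntegrableOn (fun s => G s (Xh hdel xbar s) (ubar s))
      (Set.Icc t₀ T) volume := hxbarP.2 ubar hubar.1 hubar.2
  have hA_int : ∀ i, IntervalIntegrable
      (fun s => f₀ s (Xh hdel (x i) s) - f₀ s (Xh hdel xbar s)) volume t₀ t :=
    fun i => (aux_toII (hxiP i).1 ht).sub (aux_toII hxbarP.1 ht)
  have hB_int : ∀ i, IntervalIntegrable
      (fun s => G s (Xh hdel (x i) s) (u i s) - G s (Xh hdel xbar s) (u i s)) volume t₀ t :=
    fun i => (aux_toII (hGxiu i) ht).sub (aux_toII (hGxbu i) ht)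
  have hD_int : ∀ i, IntervalIntegrable
      (fun s => G s (Xh hdel xbar s) (u i s) - G s (Xh hdel xbar s) (ubar s)) volume t₀ t :=
    fun i => (aux_toII (hGxbu i) ht).sub (aux_toII hGxbub ht)
  have hP_int : IntervalIntegrable
      (fun s => f₀ s (Xh hdel xbar s) + G s (Xh hdel xbar s) (ubar s)) volume t₀ t :=
    aux_toII hPint ht
  -- decomposition of each solution value
  have hEq : ∀ i, x i t = φ 0 +
      ((∫ s in t₀..t, (f₀ s (Xh hdel xbar s) + G s (Xh hdel xbar s) (ubar s)))
      + ((∫ s in t₀..t, (f₀ s (Xh hdel (x i) s) - f₀ s (Xh hdel xbar s)))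
      + ((∫ s in t₀..t, (G s (Xh hdel (x i) s) (u i s) - G s (Xh hdel xbar s) (u i s)))
      + (∫ s in t₀..t, (G s (Xh hdel xbar s) (u i s) - G s (Xh hdel xbar s) (ubar s)))))) := by
    intro i
    have h0 := (hx i).2.2 t ht
    rw [h0]
    congr 1
    rw [← intervalIntegral.integral_add (hB_int i) (hD_int i),
      ← intervalIntegral.integral_add (hA_int i) ((hB_int i).add (hD_int i)),
      ← intervalIntegral.integral_add hP_int ((hA_int i).add ((hB_int i).add (hD_int i)))]
    apply intervalIntegral.integral_congr
    intro s _
    show f₀ s (Xh hdel (x i) s) + G s (Xh hdel (x i) s) (u i s) = _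
    abel
  -- pointwise convergence of the delayed-state tuples
  have hXconv : ∀ s ∈ Set.Icc t₀ T,
      Tendsto (fun i => Xh hdel (x i) s) atTop (𝓝 (Xh hdel xbar s)) := by
    intro s hs
    show Tendsto (fun i => WithLp.toLp 2 (fun j => x i (s - hdel j))) atTop
      (𝓝 (WithLp.toLp 2 (fun j => xbar (s - hdel j))))
    exact ((PiLp.continuous_toLp 2 _).tendsto _).comp
      (tendsto_pi_nhds.2 fun j => hunif.tendsto_at (hsub hs j))
  -- dominated convergence: A-term
  have hAnorm_int : ∀ i, IntegrableOn
      (fun s => f₀ s (Xh hdel (x i) s) - f₀ s (Xh hdel xbar s)) (Set.Icc t₀ T) volume :=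
    fun i => (hxiP i).1.sub hxbarP.1
  have hA0 : Tendsto (fun i => ∫ s in Set.Icc t₀ T,
      ‖f₀ s (Xh hdel (x i) s) - f₀ s (Xh hdel xbar s)‖) atTop (𝓝 0) := by
    have hdct : Tendsto (fun i => ∫ s in Set.Icc t₀ T,
        ‖f₀ s (Xh hdel (x i) s) - f₀ s (Xh hdel xbar s)‖) atTop
        (𝓝 (∫ _s in Set.Icc t₀ T, (0 : ℝ))) := by
      apply tendsto_integral_of_dominated_convergence (fun s => μ s * (2 * (MX + 1)))
        (fun i => (hAnorm_int i).aestronglyMeasurable.norm) (hμint.mul_const _)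
      · intro i
        apply ae_restrict_of_forall_mem measurableSet_Icc
        intro s hs
        rw [Real.norm_eq_abs, abs_of_nonneg (norm_nonneg _)]
        have hb1 := hf₀.bd_val s hs (Xh hdel (x i) s)
        have hb2 := hf₀.bd_val s hs (Xh hdel xbar s)
        have hc1 := hXhbd (x i) (hbdxi i) s hs
        have hc2 := hXhbd xbar hbdxbar s hs
        have hμs := hf₀.μ_nonneg s
        calc ‖f₀ s (Xh hdel (x i) s) - f₀ s (Xh hdel xbar s)‖
            ≤ ‖f₀ s (Xh hdel (x i) s)‖ + ‖f₀ s (Xh hdel xbar s)‖ := norm_sub_le _ _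
          _ ≤ μ s * (2 * (MX + 1)) := by nlinarith
      · apply ae_restrict_of_forall_mem measurableSet_Icc
        intro s hs
        have h1 : Tendsto (fun i => f₀ s (Xh hdel (x i) s)) atTop
            (𝓝 (f₀ s (Xh hdel xbar s))) :=
          ((hf₀.smooth s).continuous.tendsto _).comp (hXconv s hs)
        exact tendsto_iff_norm_sub_tendsto_zero.1 h1
    simpa using hdct
  -- dominated convergence: B-term
  have hBnorm_int : ∀ i, IntegrableOn
      (fun s => G s (Xh hdel (x i) s) (u i s) - G s (Xh hdel xbar s) (u i s))
      (Set.Icc t₀ T) volume := fun i => (hGxiu i).sub (hGxbu i)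
  have hB0 : Tendsto (fun i => ∫ s in Set.Icc t₀ T,
      ‖G s (Xh hdel (x i) s) (u i s) - G s (Xh hdel xbar s) (u i s)‖) atTop (𝓝 0) := by
    have hdct : Tendsto (fun i => ∫ s in Set.Icc t₀ T,
        ‖G s (Xh hdel (x i) s) (u i s) - G s (Xh hdel xbar s) (u i s)‖) atTop
        (𝓝 (∫ _s in Set.Icc t₀ T, (0 : ℝ))) := by
      apply tendsto_integral_of_dominated_convergence (fun s => μ s * (2 * (MX + 1)) * MU)
        (fun i => (hBnorm_int i).aestronglyMeasurable.norm) ((hμint.mul_const _).mul_const _)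
      · intro i
        apply ae_restrict_of_forall_mem measurableSet_Icc
        intro s hs
        rw [Real.norm_eq_abs, abs_of_nonneg (norm_nonneg _)]
        have hb1 := hG.bd_val s hs (Xh hdel (x i) s)
        have hb2 := hG.bd_val s hs (Xh hdel xbar s)
        have hc1 := hXhbd (x i) (hbdxi i) s hs
        have hc2 := hXhbd xbar hbdxbar s hs
        have hμs := hG.μ_nonneg s
        have hus : ‖u i s‖ ≤ MU := hMU _ ((hu i).2 s hs)
        calc ‖G s (Xh hdel (x i) s) (u i s) - G s (Xh hdel xbar s) (u i s)‖
            ≤ ‖G s (Xh hdel (x i) s) (u i s)‖ + ‖G s (Xh hdel xbar s) (u i s)‖ :=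
              norm_sub_le _ _
          _ ≤ ‖G s (Xh hdel (x i) s)‖ * ‖u i s‖ + ‖G s (Xh hdel xbar s)‖ * ‖u i s‖ :=
              add_le_add ((G s (Xh hdel (x i) s)).le_opNorm _)
                ((G s (Xh hdel xbar s)).le_opNorm _)
          _ ≤ μ s * (2 * (MX + 1)) * MU := by
              have hn1 := norm_nonneg (u i s)
              have hg1 : ‖G s (Xh hdel (x i) s)‖ ≤ μ s * (MX + 1) := by nlinarith
              have hg2 : ‖G s (Xh hdel xbar s)‖ ≤ μ s * (MX + 1) := by nlinarith
              have hpos : (0 : ℝ) ≤ μ s * (MX + 1) :=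
                mul_nonneg hμs (by linarith [hMX0])
              have h4 : ‖G s (Xh hdel (x i) s)‖ * ‖u i s‖ ≤ (μ s * (MX + 1)) * MU :=
                mul_le_mul hg1 hus (norm_nonneg _) hpos
              have h5 : ‖G s (Xh hdel xbar s)‖ * ‖u i s‖ ≤ (μ s * (MX + 1)) * MU :=
                mul_le_mul hg2 hus (norm_nonneg _) hpos
              linarith
      · apply ae_restrict_of_forall_mem measurableSet_Icc
        intro s hs
        have hGc : Tendsto (fun i => G s (Xh hdel (x i) s)) atTop
            (𝓝 (G s (Xh hdel xbar s))) :=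
          ((hG.smooth s).continuous.tendsto _).comp (hXconv s hs)
        have h2 := (tendsto_iff_norm_sub_tendsto_zero.1 hGc).mul_const MU
        rw [zero_mul] at h2
        apply squeeze_zero (fun i => norm_nonneg _) _ h2
        intro i
        have h3 : G s (Xh hdel (x i) s) (u i s) - G s (Xh hdel xbar s) (u i s)
            = (G s (Xh hdel (x i) s) - G s (Xh hdel xbar s)) (u i s) := by
          rw [ContinuousLinearMap.sub_apply]
        rw [h3]
        calc ‖(G s (Xh hdel (x i) s) - G s (Xh hdel xbar s)) (u i s)‖
            ≤ ‖G s (Xh hdel (x i) s) - G s (Xh hdel xbar s)‖ * ‖u i s‖ :=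
              ContinuousLinearMap.le_opNorm _ _
          _ ≤ ‖G s (Xh hdel (x i) s) - G s (Xh hdel xbar s)‖ * MU :=
              mul_le_mul_of_nonneg_left (hMU _ ((hu i).2 s hs)) (norm_nonneg _)
    simpa using hdct
  -- interval integrals of A and B tend to zero
  have hbound_t : ∀ v : ℝ → Vec n, IntegrableOn v (Set.Icc t₀ T) volume →
      ‖∫ s in t₀..t, v s‖ ≤ ∫ s in Set.Icc t₀ T, ‖v s‖ := by
    intro v hv
    calc ‖∫ s in t₀..t, v s‖ ≤ ∫ s in t₀..t, ‖v s‖ :=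
        intervalIntegral.norm_integral_le_integral_norm ht.1
      _ = ∫ s in Set.Ioc t₀ t, ‖v s‖ := intervalIntegral.integral_of_le ht.1
      _ ≤ ∫ s in Set.Icc t₀ T, ‖v s‖ := by
          apply setIntegral_mono_set hv.norm
            (Filter.Eventually.of_forall fun s => norm_nonneg _)
          exact ((Set.Ioc_subset_Icc_self).trans
            (Set.Icc_subset_Icc le_rfl ht.2)).eventuallyLE
  have hA_t : Tendsto (fun i => ∫ s in t₀..t,
      (f₀ s (Xh hdel (x i) s) - f₀ s (Xh hdel xbar s))) atTop (𝓝 0) :=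
    squeeze_zero_norm (fun i => hbound_t _ (hAnorm_int i)) hA0
  have hB_t : Tendsto (fun i => ∫ s in t₀..t,
      (G s (Xh hdel (x i) s) (u i s) - G s (Xh hdel xbar s) (u i s))) atTop (𝓝 0) :=
    squeeze_zero_norm (fun i => hbound_t _ (hBnorm_int i)) hB0
  -- D-term via weak convergence
  obtain ⟨Yb, hYbc, hYbeq⟩ := hmk xbar hcxbar hinit
  have hgr_meas : ∀ r : Fin n, AEStronglyMeasurable
      (fun s => ContinuousLinearMap.adjoint (G s (Xh hdel xbar s))
        (EuclideanSpace.single r (1 : ℝ))) (volume.restrict (Set.Icc t₀ T)) := by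
    intro r
    exact ((hmeasAdj Yb hYbc r).aestronglyMeasurable).congr
      (ae_restrict_of_forall_mem measurableSet_Icc fun s hs => by simp only [hYbeq s hs])
  have hgr_bd : ∀ r : Fin n, ∀ s ∈ Set.Icc t₀ T,
      ‖ContinuousLinearMap.adjoint (G s (Xh hdel xbar s))
        (EuclideanSpace.single r (1 : ℝ))‖ ≤ μ s * (MX + 1) := by
    intro r s hs
    have h1 : ‖ContinuousLinearMap.adjoint (G s (Xh hdel xbar s))
        (EuclideanSpace.single r (1 : ℝ))‖
        ≤ ‖ContinuousLinearMap.adjoint (G s (Xh hdel xbar s))‖ *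
          ‖EuclideanSpace.single r (1 : ℝ)‖ :=
      ContinuousLinearMap.le_opNorm _ _
    rw [EuclideanSpace.norm_single] at h1
    have h2 : ‖(ContinuousLinearMap.adjoint (G s (Xh hdel xbar s)) : Vec n →L[ℝ] Vec m)‖
        = ‖G s (Xh hdel xbar s)‖ :=
      (ContinuousLinearMap.adjoint :
        (Vec m →L[ℝ] Vec n) ≃ₗᵢ⋆[ℝ] (Vec n →L[ℝ] Vec m)).norm_map _
    rw [h2] at h1
    simp only [norm_one, mul_one] at h1
    refine h1.trans ?_
    have hc2 := hXhbd xbar hbdxbar s hs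
    have hμs := hG.μ_nonneg s
    calc ‖G s (Xh hdel xbar s)‖ ≤ μ s * (‖Xh hdel xbar s‖ + 1) := hG.bd_val s hs _
      _ ≤ μ s * (MX + 1) := by nlinarith
  have hgr_L2 : ∀ r : Fin n, MemLp
      (fun s => ContinuousLinearMap.adjoint (G s (Xh hdel xbar s))
        (EuclideanSpace.single r (1 : ℝ))) 2 (volume.restrict (Set.Icc t₀ T)) := by
    intro r
    apply MemLp.mono' (hG.μ_L2.const_mul (MX + 1)) (hgr_meas r)
    apply ae_restrict_of_forall_mem measurableSet_Icc
    intro s hs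
    have hb := hgr_bd r s hs
    have hcomm : μ s * (MX + 1) = (MX + 1) * μ s := by ring
    rw [hcomm] at hb
    exact hb
  have hinner_int : ∀ w : ℝ → Vec m, Measurable w → (∀ s ∈ Set.Icc t₀ T, w s ∈ U) →
      ∀ r : Fin n, IntervalIntegrable (fun s => ⟪w s,
        ContinuousLinearMap.adjoint (G s (Xh hdel xbar s))
          (EuclideanSpace.single r (1 : ℝ))⟫) volume t₀ t := by
    intro w hw hwU r
    apply aux_toII _ ht
    apply aux_int hμint (C := (MX + 1) * MU)
    · exact AEStronglyMeasurable.inner hw.aestronglyMeasurable (hgr_meas r)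
    · intro s hs
      rw [Real.norm_eq_abs]
      calc |⟪w s, ContinuousLinearMap.adjoint (G s (Xh hdel xbar s))
            (EuclideanSpace.single r (1 : ℝ))⟫|
          ≤ ‖w s‖ * ‖ContinuousLinearMap.adjoint (G s (Xh hdel xbar s))
            (EuclideanSpace.single r (1 : ℝ))‖ := abs_real_inner_le_norm _ _
        _ ≤ MU * (μ s * (MX + 1)) :=
            mul_le_mul (hMU _ (hwU s hs)) (hgr_bd r s hs) (norm_nonneg _) hMU0
        _ = μ s * ((MX + 1) * MU) := by ring
  have hD_t : Tendsto (fun i => ∫ s in t₀..t,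
      (G s (Xh hdel xbar s) (u i s) - G s (Xh hdel xbar s) (ubar s))) atTop
      (𝓝 (0 : Vec n)) := by
    rw [(PiLp.homeomorph 2 (fun _ : Fin n => ℝ)).isInducing.tendsto_nhds_iff]
    apply tendsto_pi_nhds.2
    intro r
    have hind : MemLp (Set.indicator (Set.Icc t₀ t)
        (fun s => ContinuousLinearMap.adjoint (G s (Xh hdel xbar s))
          (EuclideanSpace.single r (1 : ℝ)))) 2 (volume.restrict (Set.Icc t₀ T)) :=
      (hgr_L2 r).indicator measurableSet_Icc
    have hw0 := hweak _ hind
    have hconv : ∀ w : ℝ → Vec m, (∫ s in t₀..T, ⟪w s, Set.indicator (Set.Icc t₀ t)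
        (fun s' => ContinuousLinearMap.adjoint (G s' (Xh hdel xbar s'))
          (EuclideanSpace.single r (1 : ℝ))) s⟫)
        = ∫ s in t₀..t, ⟪w s, ContinuousLinearMap.adjoint (G s (Xh hdel xbar s))
            (EuclideanSpace.single r (1 : ℝ))⟫ := by
      intro w
      have h1 : ∀ s : ℝ, ⟪w s, Set.indicator (Set.Icc t₀ t)
          (fun s' => ContinuousLinearMap.adjoint (G s' (Xh hdel xbar s'))
            (EuclideanSpace.single r (1 : ℝ))) s⟫
          = Set.indicator (Set.Icc t₀ t)
            (fun s' => ⟪w s', ContinuousLinearMap.adjoint (G s' (Xh hdel xbar s'))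
              (EuclideanSpace.single r (1 : ℝ))⟫) s := by
        intro s
        by_cases hs : s ∈ Set.Icc t₀ t
        · rw [Set.indicator_of_mem hs, Set.indicator_of_mem hs]
        · rw [Set.indicator_of_notMem hs, Set.indicator_of_notMem hs, inner_zero_right]
      simp only [h1]
      have hset : Set.Ioc t₀ T ∩ Set.Icc t₀ t = Set.Ioc t₀ t := by
        ext s'
        simp only [Set.mem_inter_iff, Set.mem_Ioc, Set.mem_Icc]
        constructor
        · rintro ⟨⟨hs1, _⟩, _, hs4⟩; exact ⟨hs1, hs4⟩
        · rintro ⟨hs1, hs4⟩; exact ⟨⟨hs1, le_trans hs4 ht.2⟩, le_of_lt hs1, hs4⟩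
      rw [intervalIntegral.integral_of_le hT', setIntegral_indicator measurableSet_Icc,
        hset, intervalIntegral.integral_of_le ht.1]
    have hw1 : Tendsto (fun i => ∫ s in t₀..t, ⟪u i s,
        ContinuousLinearMap.adjoint (G s (Xh hdel xbar s))
          (EuclideanSpace.single r (1 : ℝ))⟫) atTop
        (𝓝 (∫ s in t₀..t, ⟪ubar s, ContinuousLinearMap.adjoint (G s (Xh hdel xbar s))
          (EuclideanSpace.single r (1 : ℝ))⟫)) := by
      rw [hconv ubar] at hw0
      exact Filter.Tendsto.congr (fun i => hconv (u i)) hw0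
    have hVr : ∀ i, (∫ s in t₀..t,
        (G s (Xh hdel xbar s) (u i s) - G s (Xh hdel xbar s) (ubar s))) r
        = (∫ s in t₀..t, ⟪u i s, ContinuousLinearMap.adjoint (G s (Xh hdel xbar s))
            (EuclideanSpace.single r (1 : ℝ))⟫)
          - ∫ s in t₀..t, ⟪ubar s, ContinuousLinearMap.adjoint (G s (Xh hdel xbar s))
            (EuclideanSpace.single r (1 : ℝ))⟫ := by
      intro i
      have h5 : ∀ s : ℝ, (innerSL ℝ (EuclideanSpace.single r (1 : ℝ)))
          (G s (Xh hdel xbar s) (u i s) - G s (Xh hdel xbar s) (ubar s))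
          = ⟪u i s, ContinuousLinearMap.adjoint (G s (Xh hdel xbar s))
              (EuclideanSpace.single r (1 : ℝ))⟫
            - ⟪ubar s, ContinuousLinearMap.adjoint (G s (Xh hdel xbar s))
              (EuclideanSpace.single r (1 : ℝ))⟫ := by
        intro s
        rw [innerSL_apply_apply, inner_sub_right,
          ← ContinuousLinearMap.adjoint_inner_left (G s (Xh hdel xbar s)) (u i s)
            (EuclideanSpace.single r (1 : ℝ)),
          ← ContinuousLinearMap.adjoint_inner_left (G s (Xh hdel xbar s)) (ubar s)
            (EuclideanSpace.single r (1 : ℝ)),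
          real_inner_comm (u i s), real_inner_comm (ubar s)]
      calc (∫ s in t₀..t,
          (G s (Xh hdel xbar s) (u i s) - G s (Xh hdel xbar s) (ubar s))) r
          = (innerSL ℝ (EuclideanSpace.single r (1 : ℝ))) (∫ s in t₀..t,
            (G s (Xh hdel xbar s) (u i s) - G s (Xh hdel xbar s) (ubar s))) := by
            rw [innerSL_apply_apply, EuclideanSpace.inner_single_left]
            simp
        _ = ∫ s in t₀..t, (innerSL ℝ (EuclideanSpace.single r (1 : ℝ)))
            (G s (Xh hdel xbar s) (u i s) - G s (Xh hdel xbar s) (ubar s)) :=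
            ((innerSL ℝ (EuclideanSpace.single r (1 : ℝ))).intervalIntegral_comp_comm
              (hD_int i)).symm
        _ = ∫ s in t₀..t, (⟪u i s, ContinuousLinearMap.adjoint (G s (Xh hdel xbar s))
              (EuclideanSpace.single r (1 : ℝ))⟫
            - ⟪ubar s, ContinuousLinearMap.adjoint (G s (Xh hdel xbar s))
              (EuclideanSpace.single r (1 : ℝ))⟫) :=
            intervalIntegral.integral_congr (fun s _ => h5 s)
        _ = _ := intervalIntegral.integral_sub
            (hinner_int (u i) (hu i).1 (hu i).2 r) (hinner_int ubar hubar.1 hubar.2 r)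
    have h6 := hw1.sub_const (∫ s in t₀..t, ⟪ubar s,
      ContinuousLinearMap.adjoint (G s (Xh hdel xbar s))
        (EuclideanSpace.single r (1 : ℝ))⟫)
    rw [sub_self] at h6
    exact Filter.Tendsto.congr (fun i => (hVr i).symm) h6
  -- assemble
  have hxt : Tendsto (fun i => x i t) atTop (𝓝 (xbar t)) :=
    hunif.tendsto_at ⟨by linarith [ht.1], ht.2⟩
  have hxt2 : Tendsto (fun i => x i t) atTop (𝓝 (φ 0 +
      ((∫ s in t₀..t, (f₀ s (Xh hdel xbar s) + G s (Xh hdel xbar s) (ubar s)))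
        + ((0 : Vec n) + ((0 : Vec n) + (0 : Vec n)))))) := by
    apply Filter.Tendsto.congr (fun i => (hEq i).symm)
    exact tendsto_const_nhds.add (tendsto_const_nhds.add (hA_t.add (hB_t.add hD_t)))
  have hfinal := tendsto_nhds_unique hxt hxt2
  rw [hfinal, add_zero, add_zero, add_zero]
end
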